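/- arXiv:1912.01170 — 7 statements merged into one kernel-verified Lean document; each statement's English description precedes it below -/
import Mathlib

section
/- Let 𝒳 be a finite alphabet and let P₁, P₂ be probability mass functions on 𝒳 with full support. Then { γ ≥ 0 : inf{ D(V‖P₁) : V ∈ 𝒫(𝒳), D(V‖P₂) ≤ γ } ≥ γ } = [0, C(P₁,P₂)]. Consequently, the maximum value of γ for which the sequential binary test Φ_seq(γ) achieves Bayesian error exponent γ is the Chernoff information C(P₁,P₂). -/
open Filter

namespace SeqClass

variable {𝒳 : Type*} [Fintype 𝒳] [DecidableEq 𝒳]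

/-- `P` is a probability mass function on `𝒳`. -/
def IsPMF (P : 𝒳 → ℝ) : Prop := (∀ x, 0 ≤ P x) ∧ ∑ x, P x = 1

/-- `P` has full support. -/
def FullSupport (P : 𝒳 → ℝ) : Prop := ∀ x, 0 < P x

/-- Kullback–Leibler divergence `D(P‖Q)`. -/
noncomputable def KL (P Q : 𝒳 → ℝ) : ℝ := ∑ x, P x * Real.log (P x / Q x)

/-- Shannon entropy `H(P)`. -/
noncomputable def shEnt (P : 𝒳 → ℝ) : ℝ := -∑ x, P x * Real.log (P x)

/-- The mixture `(α•P + Q)/(1+α)`. -/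
noncomputable def mix (P Q : 𝒳 → ℝ) (α : ℝ) : 𝒳 → ℝ := fun x => (α * P x + Q x) / (1 + α)

/-- Generalized Jensen–Shannon divergence `GJS(P,Q,α) = α D(P‖P_α) + D(Q‖P_α)`. -/
noncomputable def GJS (P Q : 𝒳 → ℝ) (α : ℝ) : ℝ := α * KL P (mix P Q α) + KL Q (mix P Q α)

/-- Chernoff information `C(P,Q)`. -/
noncomputable def chernoff (P Q : 𝒳 → ℝ) : ℝ :=
  -(⨅ η : (Set.Icc (0:ℝ) 1), Real.log (∑ x, P x ^ (η : ℝ) * Q x ^ (1 - (η : ℝ))))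

/-- Empirical distribution (type) of a finite sequence. -/
noncomputable def empDist {n : ℕ} (x : Fin n → 𝒳) : 𝒳 → ℝ :=
  fun a => ((Finset.univ.filter fun i => x i = a).card : ℝ) / n

/-- Type of the length-`n` prefix of `y`. -/
noncomputable def prefixType {m : ℕ} (y : Fin m → 𝒳) (n : ℕ) : 𝒳 → ℝ :=
  fun a => ((Finset.univ.filter fun k : Fin m => (k : ℕ) < n ∧ y k = a).card : ℝ) / n

/-- i.i.d. product probability of a finite sequence. -/
noncomputable def prodProb {n : ℕ} (P : 𝒳 → ℝ) (x : Fin n → 𝒳) : ℝ := ∏ i, P (x i)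

set_option linter.unusedSectionVars false

/-- Gibbs inequality. -/
lemma gibbs (V P : 𝒳 → ℝ) (hV : IsPMF V) (hP : IsPMF P) (hs : FullSupport P) : 0 ≤ KL V P := by
  have key : ∀ x, V x - P x ≤ V x * Real.log (V x / P x) := by
    intro x
    rcases eq_or_lt_of_le (hV.1 x) with h | h
    · simp [← h]
      linarith [(hs x).le]
    · have hpos : 0 < P x / V x := div_pos (hs x) h
      have h1 := Real.log_le_sub_one_of_pos hpos
      have hlog : Real.log (V x / P x) = - Real.log (P x / V x) := by
        rw [← Real.log_inv]; congr 1; field_simp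
      have h2 := mul_le_mul_of_nonneg_left h1 h.le
      have h3 : V x * (P x / V x - 1) = P x - V x := by field_simp
      rw [hlog]
      nlinarith
  have : ∑ x, (V x - P x) ≤ ∑ x, V x * Real.log (V x / P x) :=
    Finset.sum_le_sum fun x _ => key x
  simpa [KL, Finset.sum_sub_distrib, hV.2, hP.2] using this

section Aux

variable (P1 P2 : 𝒳 → ℝ)

noncomputable def af (x : 𝒳) : ℝ := Real.log (P1 x) - Real.log (P2 x)
noncomputable def ef (η : ℝ) (x : 𝒳) : ℝ := Real.exp (η * af P1 P2 x + Real.log (P2 x))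
noncomputable def Zf (η : ℝ) : ℝ := ∑ x, ef P1 P2 η x
noncomputable def gf (η : ℝ) : ℝ := Real.log (Zf P1 P2 η)
noncomputable def Qf (η : ℝ) (x : 𝒳) : ℝ := ef P1 P2 η x / Zf P1 P2 η
noncomputable def Tf (η : ℝ) : ℝ := ∑ x, Qf P1 P2 η x * af P1 P2 x

end Aux

variable (P1 P2 : 𝒳 → ℝ)

lemma Zf_pos [Nonempty 𝒳] (η : ℝ) : 0 < Zf P1 P2 η :=
  Finset.sum_pos (fun x _ => Real.exp_pos _) ⟨Classical.arbitrary 𝒳, Finset.mem_univ _⟩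

lemma Qf_pmf [Nonempty 𝒳] (η : ℝ) : IsPMF (Qf P1 P2 η) := by
  constructor
  · intro x; exact div_nonneg (Real.exp_pos _).le (Zf_pos P1 P2 η).le
  · unfold Qf
    rw [← Finset.sum_div, ← Zf]
    exact div_self (Zf_pos P1 P2 η).ne'

lemma Qf_fs [Nonempty 𝒳] (η : ℝ) : FullSupport (Qf P1 P2 η) :=
  fun x => div_pos (Real.exp_pos _) (Zf_pos P1 P2 η)

lemma log_Qf [Nonempty 𝒳] (η : ℝ) (x : 𝒳) :
    Real.log (Qf P1 P2 η x) = η * af P1 P2 x + Real.log (P2 x) - gf P1 P2 η := by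
  rw [Qf, ef, Real.log_div (Real.exp_pos _).ne' (Zf_pos P1 P2 η).ne', Real.log_exp, gf]

/-- chernoff rewritten via gf -/
lemma chernoff_eq (hs1 : FullSupport P1) (hs2 : FullSupport P2) :
    chernoff P1 P2 = -(⨅ η : (Set.Icc (0:ℝ) 1), gf P1 P2 (η : ℝ)) := by
  unfold chernoff
  congr 1
  apply congrArg
  funext η
  unfold gf Zf ef af
  congr 1
  apply Finset.sum_congr rfl
  intro x _
  rw [Real.rpow_def_of_pos (hs1 x), Real.rpow_def_of_pos (hs2 x), ← Real.exp_add]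
  ring_nf

/-- key inequality: η D(V‖P1) + (1-η) D(V‖P2) ≥ -g(η) -/
lemma key_ineq [Nonempty 𝒳] (hs1 : FullSupport P1) (hs2 : FullSupport P2)
    (V : 𝒳 → ℝ) (hV : IsPMF V) (η : ℝ) :
    -(gf P1 P2 η) ≤ η * KL V P1 + (1 - η) * KL V P2 := by
  have hg : 0 ≤ KL V (Qf P1 P2 η) := gibbs V _ hV (Qf_pmf P1 P2 η) (Qf_fs P1 P2 η)
  have e1 : ∀ x ∈ Finset.univ, V x * Real.log (V x / Qf P1 P2 η x)
      = η * (V x * Real.log (V x / P1 x)) + (1 - η) * (V x * Real.log (V x / P2 x))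
        + gf P1 P2 η * V x := by
    intro x _
    rcases eq_or_lt_of_le (hV.1 x) with h | h
    · simp [← h]
    · rw [Real.log_div h.ne' (Qf_fs P1 P2 η x).ne', Real.log_div h.ne' (hs1 x).ne',
        Real.log_div h.ne' (hs2 x).ne', log_Qf, af]
      ring
  have hident : KL V (Qf P1 P2 η)
      = η * KL V P1 + (1 - η) * KL V P2 + gf P1 P2 η := by
    calc KL V (Qf P1 P2 η)
        = ∑ x, (η * (V x * Real.log (V x / P1 x)) + (1 - η) * (V x * Real.log (V x / P2 x))
            + gf P1 P2 η * V x) := Finset.sum_congr rfl e1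
      _ = η * ∑ x, V x * Real.log (V x / P1 x) + (1 - η) * ∑ x, V x * Real.log (V x / P2 x)
            + gf P1 P2 η * ∑ x, V x := by
          rw [Finset.sum_add_distrib, Finset.sum_add_distrib, ← Finset.mul_sum,
            ← Finset.mul_sum, ← Finset.mul_sum]
      _ = η * KL V P1 + (1 - η) * KL V P2 + gf P1 P2 η := by
          rw [hV.2, mul_one]; rfl
  linarith

/-- tangent inequality -/
lemma tangent [Nonempty 𝒳] (η η' : ℝ) :
    gf P1 P2 η + (η' - η) * Tf P1 P2 η ≤ gf P1 P2 η' := by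
  have hg : 0 ≤ KL (Qf P1 P2 η) (Qf P1 P2 η') :=
    gibbs _ _ (Qf_pmf P1 P2 η) (Qf_pmf P1 P2 η') (Qf_fs P1 P2 η')
  have e1 : ∀ x ∈ Finset.univ, Qf P1 P2 η x * Real.log (Qf P1 P2 η x / Qf P1 P2 η' x)
      = (η - η') * (Qf P1 P2 η x * af P1 P2 x)
        + (gf P1 P2 η' - gf P1 P2 η) * Qf P1 P2 η x := by
    intro x _
    rw [Real.log_div (Qf_fs P1 P2 η x).ne' (Qf_fs P1 P2 η' x).ne', log_Qf, log_Qf]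
    ring
  have hident : KL (Qf P1 P2 η) (Qf P1 P2 η')
      = (η - η') * Tf P1 P2 η + (gf P1 P2 η' - gf P1 P2 η) := by
    calc KL (Qf P1 P2 η) (Qf P1 P2 η')
        = ∑ x, ((η - η') * (Qf P1 P2 η x * af P1 P2 x)
            + (gf P1 P2 η' - gf P1 P2 η) * Qf P1 P2 η x) := Finset.sum_congr rfl e1
      _ = (η - η') * ∑ x, Qf P1 P2 η x * af P1 P2 x
            + (gf P1 P2 η' - gf P1 P2 η) * ∑ x, Qf P1 P2 η x := by
          rw [Finset.sum_add_distrib, ← Finset.mul_sum, ← Finset.mul_sum]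
      _ = (η - η') * Tf P1 P2 η + (gf P1 P2 η' - gf P1 P2 η) := by
          rw [(Qf_pmf P1 P2 η).2, mul_one]; rfl
  linarith

lemma Zf_cont [Nonempty 𝒳] : Continuous (Zf P1 P2) := by
  unfold Zf ef
  exact continuous_finset_sum _ fun x _ =>
    Real.continuous_exp.comp (by continuity)

lemma Tf_cont [Nonempty 𝒳] : Continuous (Tf P1 P2) := by
  have heq : Tf P1 P2 = fun η => (∑ x, ef P1 P2 η x * af P1 P2 x) / Zf P1 P2 η := by
    funext η
    rw [Tf, Finset.sum_div]
    exact Finset.sum_congr rfl fun x _ => by rw [Qf]; ring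
  rw [heq]
  apply Continuous.div
  · exact continuous_finset_sum _ fun x _ =>
      ((Real.continuous_exp.comp (by continuity)).mul continuous_const)
  · exact Zf_cont P1 P2
  · exact fun η => (Zf_pos P1 P2 η).ne'

lemma KL_Qf_P1 [Nonempty 𝒳] (hs1 : FullSupport P1) (η : ℝ) :
    KL (Qf P1 P2 η) P1 = (η - 1) * Tf P1 P2 η - gf P1 P2 η := by
  have e1 : ∀ x ∈ Finset.univ, Qf P1 P2 η x * Real.log (Qf P1 P2 η x / P1 x)
      = (η - 1) * (Qf P1 P2 η x * af P1 P2 x) - gf P1 P2 η * Qf P1 P2 η x := by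
    intro x _
    rw [Real.log_div (Qf_fs P1 P2 η x).ne' (hs1 x).ne', log_Qf, af]
    ring
  calc KL (Qf P1 P2 η) P1
      = ∑ x, ((η - 1) * (Qf P1 P2 η x * af P1 P2 x) - gf P1 P2 η * Qf P1 P2 η x) :=
        Finset.sum_congr rfl e1
    _ = (η - 1) * ∑ x, Qf P1 P2 η x * af P1 P2 x - gf P1 P2 η * ∑ x, Qf P1 P2 η x := by
        rw [Finset.sum_sub_distrib, ← Finset.mul_sum, ← Finset.mul_sum]
    _ = (η - 1) * Tf P1 P2 η - gf P1 P2 η := by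
        rw [(Qf_pmf P1 P2 η).2, mul_one]; rfl

lemma KL_Qf_P2 [Nonempty 𝒳] (hs2 : FullSupport P2) (η : ℝ) :
    KL (Qf P1 P2 η) P2 = η * Tf P1 P2 η - gf P1 P2 η := by
  have e1 : ∀ x ∈ Finset.univ, Qf P1 P2 η x * Real.log (Qf P1 P2 η x / P2 x)
      = η * (Qf P1 P2 η x * af P1 P2 x) - gf P1 P2 η * Qf P1 P2 η x := by
    intro x _
    rw [Real.log_div (Qf_fs P1 P2 η x).ne' (hs2 x).ne', log_Qf, af]
    ring
  calc KL (Qf P1 P2 η) P2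
      = ∑ x, (η * (Qf P1 P2 η x * af P1 P2 x) - gf P1 P2 η * Qf P1 P2 η x) :=
        Finset.sum_congr rfl e1
    _ = η * ∑ x, Qf P1 P2 η x * af P1 P2 x - gf P1 P2 η * ∑ x, Qf P1 P2 η x := by
        rw [Finset.sum_sub_distrib, ← Finset.mul_sum, ← Finset.mul_sum]
    _ = η * Tf P1 P2 η - gf P1 P2 η := by
        rw [(Qf_pmf P1 P2 η).2, mul_one]; rfl

lemma gf_contOn [Nonempty 𝒳] : ContinuousOn (gf P1 P2) (Set.Icc 0 1) :=
  ((Zf_cont P1 P2).continuousOn).log (fun η _ => (Zf_pos P1 P2 η).ne')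

lemma exists_min [Nonempty 𝒳] : ∃ η ∈ Set.Icc (0:ℝ) 1, IsMinOn (gf P1 P2) (Set.Icc 0 1) η :=
  isCompact_Icc.exists_isMinOn (Set.nonempty_Icc.2 zero_le_one) (gf_contOn P1 P2)

lemma iInf_eq [Nonempty 𝒳] {η₀ : ℝ} (hmem : η₀ ∈ Set.Icc (0:ℝ) 1)
    (hmin : IsMinOn (gf P1 P2) (Set.Icc 0 1) η₀) :
    (⨅ η : (Set.Icc (0:ℝ) 1), gf P1 P2 (η : ℝ)) = gf P1 P2 η₀ := by
  have hmin' : ∀ η' ∈ Set.Icc (0:ℝ) 1, gf P1 P2 η₀ ≤ gf P1 P2 η' := isMinOn_iff.mp hmin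
  have hb : BddBelow (Set.range fun η : Set.Icc (0:ℝ) 1 => gf P1 P2 (η : ℝ)) := by
    refine ⟨gf P1 P2 η₀, ?_⟩
    rintro y ⟨η, rfl⟩
    exact hmin' η η.2
  apply le_antisymm
  · exact ciInf_le hb ⟨η₀, hmem⟩
  · exact le_ciInf fun η => hmin' η η.2

lemma T_sign_upper [Nonempty 𝒳] {η₀ : ℝ} (hmem : η₀ ∈ Set.Icc (0:ℝ) 1)
    (hmin : IsMinOn (gf P1 P2) (Set.Icc 0 1) η₀) :
    0 ≤ (1 - η₀) * Tf P1 P2 η₀ := by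
  rcases eq_or_lt_of_le hmem.2 with h1 | h1
  · rw [h1]; simp
  · have hT : 0 ≤ Tf P1 P2 η₀ := by
      have hten : Tendsto (Tf P1 P2) (nhdsWithin η₀ (Set.Ioi η₀)) (nhds (Tf P1 P2 η₀)) :=
        ((Tf_cont P1 P2).continuousAt).continuousWithinAt
      refine ge_of_tendsto hten ?_
      have h2 : Set.Iio (1:ℝ) ∈ nhdsWithin η₀ (Set.Ioi η₀) :=
        mem_nhdsWithin_of_mem_nhds (Iio_mem_nhds h1)
      filter_upwards [h2, self_mem_nhdsWithin] with η' hlt hgt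
      have hη'mem : η' ∈ Set.Icc (0:ℝ) 1 := ⟨le_of_lt (lt_of_le_of_lt hmem.1 hgt), hlt.le⟩
      have ht := tangent P1 P2 η' η₀
      have hm : gf P1 P2 η₀ ≤ gf P1 P2 η' := hmin hη'mem
      have : (η₀ - η') * Tf P1 P2 η' ≤ 0 := by linarith
      have hd : η₀ - η' < 0 := by simpa using hgt
      nlinarith
    have : 0 ≤ 1 - η₀ := by linarith
    positivity

lemma T_sign_lower [Nonempty 𝒳] {η₀ : ℝ} (hmem : η₀ ∈ Set.Icc (0:ℝ) 1)
    (hmin : IsMinOn (gf P1 P2) (Set.Icc 0 1) η₀) :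
    η₀ * Tf P1 P2 η₀ ≤ 0 := by
  rcases eq_or_lt_of_le hmem.1 with h1 | h1
  · rw [← h1]; simp
  · have hT : Tf P1 P2 η₀ ≤ 0 := by
      have hten : Tendsto (Tf P1 P2) (nhdsWithin η₀ (Set.Iio η₀)) (nhds (Tf P1 P2 η₀)) :=
        ((Tf_cont P1 P2).continuousAt).continuousWithinAt
      refine le_of_tendsto hten ?_
      have h2 : Set.Ioi (0:ℝ) ∈ nhdsWithin η₀ (Set.Iio η₀) :=
        mem_nhdsWithin_of_mem_nhds (Ioi_mem_nhds h1)
      filter_upwards [h2, self_mem_nhdsWithin] with η' hgt hlt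
      have hη'mem : η' ∈ Set.Icc (0:ℝ) 1 := ⟨hgt.le, le_of_lt (lt_of_lt_of_le hlt hmem.2)⟩
      have ht := tangent P1 P2 η' η₀
      have hm : gf P1 P2 η₀ ≤ gf P1 P2 η' := hmin hη'mem
      have : (η₀ - η') * Tf P1 P2 η' ≤ 0 := by linarith
      have hd : 0 < η₀ - η' := by simpa using hlt
      nlinarith
    exact mul_nonpos_of_nonneg_of_nonpos h1.le hT


lemma gf_zero [Nonempty 𝒳] (hP2 : IsPMF P2) (hs2 : FullSupport P2) : gf P1 P2 0 = 0 := by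
  have : Zf P1 P2 0 = 1 := by
    unfold Zf ef
    rw [← hP2.2]
    exact Finset.sum_congr rfl fun x _ => by
      rw [zero_mul, zero_add, Real.exp_log (hs2 x)]
  rw [gf, this, Real.log_one]

lemma KL_self (hs : FullSupport P2) : KL P2 P2 = 0 := by
  unfold KL
  apply Finset.sum_eq_zero
  intro x _
  rw [div_self (hs x).ne', Real.log_one, mul_zero]

theorem max_bayesian_exponent_is_chernoff
    (P1 P2 : 𝒳 → ℝ) (hP1 : IsPMF P1) (hP2 : IsPMF P2)
    (hs1 : FullSupport P1) (hs2 : FullSupport P2) :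
    {γ : ℝ | 0 ≤ γ ∧
        γ ≤ sInf {v : ℝ | ∃ V : 𝒳 → ℝ, IsPMF V ∧ KL V P2 ≤ γ ∧ v = KL V P1}} =
      Set.Icc 0 (chernoff P1 P2) := by
  have hne : Nonempty 𝒳 := by
    by_contra h
    rw [not_nonempty_iff] at h
    have := hP1.2
    rw [Finset.univ_eq_empty, Finset.sum_empty] at this
    norm_num at this
  obtain ⟨η₀, hmem, hmin⟩ := exists_min P1 P2
  have hC : chernoff P1 P2 = -(gf P1 P2 η₀) := by
    rw [chernoff_eq P1 P2 hs1 hs2, iInf_eq P1 P2 hmem hmin]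
  have hg0 : gf P1 P2 0 = 0 := gf_zero P1 P2 hP2 hs2
  have hCnn : 0 ≤ chernoff P1 P2 := by
    have := isMinOn_iff.mp hmin 0 ⟨le_refl 0, zero_le_one⟩
    rw [hC]; linarith [hg0 ▸ this]
  have hQ1 : KL (Qf P1 P2 η₀) P1 ≤ chernoff P1 P2 := by
    rw [KL_Qf_P1 P1 P2 hs1, hC]
    linarith [T_sign_upper P1 P2 hmem hmin]
  have hQ2 : KL (Qf P1 P2 η₀) P2 ≤ chernoff P1 P2 := by
    rw [KL_Qf_P2 P1 P2 hs2, hC]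
    linarith [T_sign_lower P1 P2 hmem hmin]
  ext γ
  simp only [Set.mem_setOf_eq, Set.mem_Icc]
  constructor
  · rintro ⟨h0, hinf⟩
    refine ⟨h0, ?_⟩
    by_contra hlt
    push_neg at hlt
    have hbdd : BddBelow {v : ℝ | ∃ V : 𝒳 → ℝ, IsPMF V ∧ KL V P2 ≤ γ ∧ v = KL V P1} := by
      refine ⟨0, ?_⟩
      rintro v ⟨V, hVp, _, rfl⟩
      exact gibbs V P1 hVp hP1 hs1
    have hmemS : KL (Qf P1 P2 η₀) P1
        ∈ {v : ℝ | ∃ V : 𝒳 → ℝ, IsPMF V ∧ KL V P2 ≤ γ ∧ v = KL V P1} :=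
      ⟨Qf P1 P2 η₀, Qf_pmf P1 P2 η₀, le_of_lt (lt_of_le_of_lt hQ2 hlt), rfl⟩
    have := csInf_le hbdd hmemS
    linarith
  · rintro ⟨h0, hC'⟩
    refine ⟨h0, ?_⟩
    have hne' : Set.Nonempty {v : ℝ | ∃ V : 𝒳 → ℝ, IsPMF V ∧ KL V P2 ≤ γ ∧ v = KL V P1} :=
      ⟨KL P2 P1, ⟨P2, hP2, by rw [KL_self P2 hs2]; exact h0, rfl⟩⟩
    apply le_csInf hne'
    rintro v ⟨V, hVp, hV2, rfl⟩
    rcases eq_or_lt_of_le hmem.1 with hz | hpos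
    · have hCz : chernoff P1 P2 = 0 := by rw [hC, ← hz, hg0, neg_zero]
      have hγ0 : γ = 0 := le_antisymm (hCz ▸ hC') h0
      rw [hγ0]
      exact gibbs V P1 hVp hP1 hs1
    · by_contra hv
      push_neg at hv
      have hk := key_ineq P1 P2 hs1 hs2 V hVp η₀
      have h1 : η₀ * KL V P1 < η₀ * γ := mul_lt_mul_of_pos_left hv hpos
      have h2 : (1 - η₀) * KL V P2 ≤ (1 - η₀) * γ :=
        mul_le_mul_of_nonneg_left hV2 (by linarith [hmem.2])
      have hCle : γ ≤ -(gf P1 P2 η₀) := hC ▸ hC'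
      nlinarith

end SeqClass
end

section
/- Fix a finite alphabet 𝒳, an integer M ≥ 2, pairwise distinct probability mass functions P₁,…,P_M on 𝒳 with full support, and γ ∈ (0, min_{(i,j): i≠j} C(P_i,P_j)]. For each ordered pair (i,j) with i ≠ j, let θ*_{i(j),γ} > 0 solve GJS(P_j, P_i, θ) = γθ, and set θ_min = min_{(i,j): i≠j} θ*_{i(j),γ}. Then for every ordered pair (l,k) with l ≠ k one has GJS(P_l, P_k, θ_min) ≥ γ·θ_min, and min_{(l,k): l≠k} GJS(P_l, P_k, θ_min)/θ_min = γ. Hence Gutman's fixed-length multiclass test with training-to-test ratio α = θ_min has Bayesian error exponent exactly γ, equal to the achievable Bayesian error exponent of the rejection-free sequential test Φ^{(M)}_seq(γ). -/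
open Filter

namespace SeqClass

variable {𝒳 : Type*} [Fintype 𝒳] [DecidableEq 𝒳]

lemma mix_pos {P Q : 𝒳 → ℝ} {α : ℝ} (hP : ∀ x, 0 ≤ P x) (hQ : FullSupport Q)
    (hα : 0 ≤ α) : FullSupport (mix P Q α) := by
  intro x
  have h1 := hP x
  have h2 := hQ x
  exact div_pos (by nlinarith) (by linarith)

lemma mix_sum {P Q : 𝒳 → ℝ} {α : ℝ} (hP1 : ∑ x, P x = 1) (hQ1 : ∑ x, Q x = 1)
    (hα : 0 ≤ α) : ∑ x, mix P Q α x = 1 := by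
  unfold mix
  rw [← Finset.sum_div, Finset.sum_add_distrib, ← Finset.mul_sum, hP1, hQ1]
  field_simp
  ring

lemma KL_nonneg {Q R : 𝒳 → ℝ} (hQs : FullSupport Q) (hQ1 : ∑ x, Q x = 1)
    (hRs : FullSupport R) (hR1 : ∑ x, R x = 1) : 0 ≤ KL Q R := by
  have key : ∀ x : 𝒳, Q x - R x ≤ Q x * Real.log (Q x / R x) := by
    intro x
    have hq := hQs x
    have hr := hRs x
    have h := Real.log_le_sub_one_of_pos (show (0:ℝ) < R x / Q x from div_pos hr hq)
    have h2 := mul_le_mul_of_nonneg_left h hq.le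
    have h3 : Q x * (R x / Q x - 1) = R x - Q x := by field_simp
    have h4 : Real.log (Q x / R x) = - Real.log (R x / Q x) := by
      rw [← Real.log_inv]
      congr 1
      field_simp
    rw [h4]
    nlinarith
  have : (0:ℝ) = ∑ x, (Q x - R x) := by
    rw [Finset.sum_sub_distrib, hQ1, hR1]; ring
  rw [KL, this]
  exact Finset.sum_le_sum fun x _ => key x

lemma GJS_le_of_pmf {P Q R : 𝒳 → ℝ} {t : ℝ} (hP : IsPMF P) (hQ : IsPMF Q)
    (hPs : FullSupport P) (hQs : FullSupport Q) (hRs : FullSupport R)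
    (hR1 : ∑ x, R x = 1) (ht : 0 ≤ t) :
    GJS P Q t ≤ t * KL P R + KL Q R := by
  set m := mix P Q t with hm
  have hms : FullSupport m := mix_pos hP.1 hQs ht
  have hm1 : ∑ x, m x = 1 := mix_sum hP.2 hQ.2 ht
  have hdec : t * KL P R + KL Q R = GJS P Q t + (1 + t) * KL m R := by
    unfold GJS KL
    rw [Finset.mul_sum, Finset.mul_sum, Finset.mul_sum, ← Finset.sum_add_distrib,
      ← Finset.sum_add_distrib, ← Finset.sum_add_distrib]
    refine Finset.sum_congr rfl fun x _ => ?_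
    have hmx : (1 + t) * m x = t * P x + Q x := by
      rw [hm]; unfold mix
      field_simp
    rw [Real.log_div (hPs x).ne' (hRs x).ne', Real.log_div (hPs x).ne' (hms x).ne',
      Real.log_div (hQs x).ne' (hRs x).ne', Real.log_div (hQs x).ne' (hms x).ne',
      Real.log_div (hms x).ne' (hRs x).ne']
    linear_combination (Real.log (R x) - Real.log (m x)) * hmx
  have hKLm : 0 ≤ KL m R := KL_nonneg hms hm1 hRs hR1
  nlinarith

lemma GJS_ratio_mono {P Q : 𝒳 → ℝ} (hP : IsPMF P) (hQ : IsPMF Q)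
    (hPs : FullSupport P) (hQs : FullSupport Q) {s t : ℝ} (hs : 0 < s) (hst : s ≤ t) :
    (s / t) * GJS P Q t ≤ GJS P Q s := by
  have ht : 0 < t := hs.trans_le hst
  set m := mix P Q s with hm
  have hms : FullSupport m := mix_pos hP.1 hQs hs.le
  have hm1 : ∑ x, m x = 1 := mix_sum hP.2 hQ.2 hs.le
  have h1 : GJS P Q t ≤ t * KL P m + KL Q m :=
    GJS_le_of_pmf hP hQ hPs hQs hms hm1 ht.le
  have h2 : 0 ≤ KL Q m := KL_nonneg hQs hQ.2 hms hm1
  have hst1 : s / t ≤ 1 := (div_le_one ht).2 hst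
  calc (s / t) * GJS P Q t ≤ (s / t) * (t * KL P m + KL Q m) := by
        exact mul_le_mul_of_nonneg_left h1 (by positivity)
    _ = s * KL P m + (s / t) * KL Q m := by field_simp
    _ ≤ s * KL P m + KL Q m := by nlinarith
    _ = GJS P Q s := rfl

theorem multiclass_sequential_matches_gutman_bayesian
    (M : ℕ) (hM : 2 ≤ M) (P : Fin M → 𝒳 → ℝ)
    (hP : ∀ i, IsPMF (P i)) (hs : ∀ i, FullSupport (P i))
    (hdist : ∀ i j, i ≠ j → P i ≠ P j)
    (γ : ℝ) (hγ0 : 0 < γ)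
    (hγC : γ ≤ ⨅ p : {q : Fin M × Fin M // q.1 ≠ q.2}, chernoff (P p.1.1) (P p.1.2))
    (θ : Fin M → Fin M → ℝ)
    (hθ : ∀ i j, i ≠ j → 0 < θ i j ∧ GJS (P j) (P i) (θ i j) = γ * θ i j)
    (θmin : ℝ)
    (hθmin : θmin = ⨅ p : {q : Fin M × Fin M // q.1 ≠ q.2}, θ p.1.1 p.1.2) :
    (∀ l k : Fin M, l ≠ k → γ * θmin ≤ GJS (P l) (P k) θmin) ∧
    (⨅ p : {q : Fin M × Fin M // q.1 ≠ q.2}, GJS (P p.1.1) (P p.1.2) θmin / θmin) = γ := by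
  haveI hne : Nonempty {q : Fin M × Fin M // q.1 ≠ q.2} :=
    ⟨⟨(⟨0, by omega⟩, ⟨1, by omega⟩), by simp [Fin.ext_iff]⟩⟩
  set ι := {q : Fin M × Fin M // q.1 ≠ q.2}
  set f : ι → ℝ := fun p => θ p.1.1 p.1.2 with hf
  obtain ⟨p0, hp0⟩ := Finite.exists_min f
  have hbdd : BddBelow (Set.range f) := (Set.finite_range f).bddBelow
  have hθmin_eq : θmin = θ p0.1.1 p0.1.2 := by
    rw [hθmin]
    exact le_antisymm (ciInf_le hbdd p0) (le_ciInf hp0)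
  have hθmin_pos : 0 < θmin := hθmin_eq ▸ (hθ _ _ p0.2).1
  have hle : ∀ i j : Fin M, i ≠ j → θmin ≤ θ i j := by
    intro i j h
    rw [hθmin]
    exact ciInf_le hbdd ⟨(i, j), h⟩
  have part1 : ∀ l k : Fin M, l ≠ k → γ * θmin ≤ GJS (P l) (P k) θmin := by
    intro l k hlk
    obtain ⟨hpos, heq⟩ := hθ k l (Ne.symm hlk)
    have hmono := GJS_ratio_mono (hP l) (hP k) (hs l) (hs k) hθmin_pos
      (hle k l (Ne.symm hlk))
    rw [heq] at hmono
    have hcalc : θmin / θ k l * (γ * θ k l) = γ * θmin := by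
      field_simp
    linarith [hcalc ▸ hmono]
  refine ⟨part1, ?_⟩
  set g : ι → ℝ := fun p => GJS (P p.1.1) (P p.1.2) θmin / θmin with hg
  have hγle : ∀ p : ι, γ ≤ g p := by
    intro p
    exact (le_div_iff₀ hθmin_pos).2 (part1 p.1.1 p.1.2 p.2)
  have hgbdd : BddBelow (Set.range g) := (Set.finite_range g).bddBelow
  refine le_antisymm ?_ (le_ciInf hγle)
  have hgval : g ⟨(p0.1.2, p0.1.1), Ne.symm p0.2⟩ = γ := by
    have h2 := (hθ p0.1.1 p0.1.2 p0.2).2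
    rw [← hθmin_eq] at h2
    rw [hg]
    simp only
    rw [h2]
    field_simp
  exact (ciInf_le hgbdd ⟨(p0.1.2, p0.1.1), Ne.symm p0.2⟩).trans_eq hgval


end SeqClass
end

section
/- Fix a finite alphabet 𝒳 and probability mass functions P₁, P₂ on 𝒳 with full support. For α > 0 and λ ≥ 0 define F₁(α,λ) = inf{ D(Q₁‖P₁) + (1/α)·D(Q₂‖P₂) : (Q₁,Q₂) ∈ 𝒫(𝒳)², (1/α)·GJS(Q₁,Q₂,α) ≤ λ }. Then the map α ↦ sup_{λ ≥ 0} min{ λ, F₁(α,λ) } (the Bayesian error exponent of Gutman's test) is nonincreasing in α on (0,∞). -/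
open Filter

namespace SeqClass

variable {𝒳 : Type*} [Fintype 𝒳] [DecidableEq 𝒳]

/-- The exponent `F₁(α,λ)` from Gutman's test. -/
noncomputable def F1 (P1 P2 : 𝒳 → ℝ) (α lam : ℝ) : ℝ :=
  sInf {v : ℝ | ∃ Q1 Q2 : 𝒳 → ℝ, IsPMF Q1 ∧ IsPMF Q2 ∧
    (1 / α) * GJS Q1 Q2 α ≤ lam ∧ v = KL Q1 P1 + (1 / α) * KL Q2 P2}

/-- Bayesian error exponent of Gutman's test with training-to-test ratio `α`. -/
noncomputable def gutmanBayes (P1 P2 : 𝒳 → ℝ) (α : ℝ) : ℝ :=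
  sSup {e : ℝ | ∃ lam : ℝ, 0 ≤ lam ∧ e = min lam (F1 P1 P2 α lam)}


section AuxLemmas
set_option linter.unusedSectionVars false

lemma gibbs_s9 {Q P : 𝒳 → ℝ} (hQ : IsPMF Q) (hP0 : ∀ x, 0 ≤ P x) (hPs : ∑ x, P x ≤ 1)
    (h : ∀ x, 0 < Q x → 0 < P x) : 0 ≤ KL Q P := by
  have key : ∀ x : 𝒳, Q x - (if 0 < Q x then P x else 0) ≤ Q x * Real.log (Q x / P x) := by
    intro x
    by_cases hx : 0 < Q x
    · have hp := h x hx
      have h1 : Real.log (P x / Q x) ≤ P x / Q x - 1 :=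
        Real.log_le_sub_one_of_pos (div_pos hp hx)
      have h2 : Real.log (Q x / P x) = - Real.log (P x / Q x) := by
        rw [← Real.log_inv]; congr 1; field_simp
      simp only [hx, if_true]
      rw [h2]
      have h4 := mul_le_mul_of_nonneg_left h1 hx.le
      have h3 : Q x * (P x / Q x - 1) = P x - Q x := by field_simp
      nlinarith
    · have : Q x = 0 := le_antisymm (not_lt.mp hx) (hQ.1 x)
      simp [this, hx]
  have hsum := Finset.sum_le_sum (fun x (_ : x ∈ Finset.univ) => key x)
  have h1 : (0:ℝ) ≤ ∑ x, (Q x - (if 0 < Q x then P x else 0)) := by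
    rw [Finset.sum_sub_distrib, hQ.2]
    have : ∑ x, (if 0 < Q x then P x else 0) ≤ ∑ x, P x :=
      Finset.sum_le_sum (fun x _ => by split <;> simp [hP0 x])
    linarith
  exact le_trans h1 hsum

lemma KL_self_s9 {P : 𝒳 → ℝ} : KL P P = 0 := by
  unfold KL
  apply Finset.sum_eq_zero
  intro x _
  by_cases hx : P x = 0
  · simp [hx]
  · simp [div_self hx]

lemma mix_nonneg {Q1 Q2 : 𝒳 → ℝ} {α : ℝ} (hα : 0 < α) (h1 : ∀ x, 0 ≤ Q1 x)
    (h2 : ∀ x, 0 ≤ Q2 x) (x : 𝒳) : 0 ≤ mix Q1 Q2 α x :=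
  div_nonneg (by nlinarith [h1 x, h2 x]) (by linarith)

lemma mix_pmf {Q1 Q2 : 𝒳 → ℝ} {α : ℝ} (hα : 0 < α) (h1 : IsPMF Q1) (h2 : IsPMF Q2) :
    IsPMF (mix Q1 Q2 α) := by
  refine ⟨mix_nonneg hα h1.1 h2.1, ?_⟩
  unfold mix
  rw [← Finset.sum_div, Finset.sum_add_distrib, ← Finset.mul_sum, h1.2, h2.2]
  field_simp; ring

lemma mix_pos_left {Q1 Q2 : 𝒳 → ℝ} {α : ℝ} (hα : 0 < α) (h2 : ∀ x, 0 ≤ Q2 x) {x : 𝒳}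
    (h : 0 < Q1 x) : 0 < mix Q1 Q2 α x := div_pos (by nlinarith [h2 x]) (by linarith)

lemma mix_pos_right {Q1 Q2 : 𝒳 → ℝ} {α : ℝ} (hα : 0 < α) (h1 : ∀ x, 0 ≤ Q1 x) {x : 𝒳}
    (h : 0 < Q2 x) : 0 < mix Q1 Q2 α x := div_pos (by nlinarith [h1 x]) (by linarith)

lemma mix_support {Q1 Q2 : 𝒳 → ℝ} {α β : ℝ} (hα : 0 < α) (hβ : 0 < β)
    (h1 : ∀ x, 0 ≤ Q1 x) (h2 : ∀ x, 0 ≤ Q2 x) :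
    ∀ x, 0 < mix Q1 Q2 β x → 0 < mix Q1 Q2 α x := by
  intro x hx
  rcases lt_or_ge 0 (Q1 x) with h | h
  · exact mix_pos_left hα h2 h
  rcases lt_or_ge 0 (Q2 x) with h' | h'
  · exact mix_pos_right hα h1 h'
  · exfalso
    have hq1 : Q1 x = 0 := le_antisymm h (h1 x)
    have hq2 : Q2 x = 0 := le_antisymm h' (h2 x)
    simp [mix, hq1, hq2] at hx

lemma compensation {Q1 Q2 Q : 𝒳 → ℝ} {α : ℝ} (hα : 0 < α) (h1 : IsPMF Q1) (h2 : IsPMF Q2)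
    (hQpos : ∀ x, 0 < mix Q1 Q2 α x → 0 < Q x) :
    α * KL Q1 Q + KL Q2 Q = GJS Q1 Q2 α + (1 + α) * KL (mix Q1 Q2 α) Q := by
  unfold GJS KL
  rw [Finset.mul_sum, Finset.mul_sum, Finset.mul_sum, ← Finset.sum_add_distrib,
      ← Finset.sum_add_distrib, ← Finset.sum_add_distrib]
  apply Finset.sum_congr rfl
  intro x _
  by_cases hMpos : 0 < mix Q1 Q2 α x
  · have hQx : 0 < Q x := hQpos x hMpos
    set M := mix Q1 Q2 α x with hM
    set L := Real.log M - Real.log (Q x) with hL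
    have hMQ : M * Real.log (M / Q x) = M * L := by
      rw [Real.log_div hMpos.ne' hQx.ne']
    have e1 : Q1 x * Real.log (Q1 x / Q x) = Q1 x * Real.log (Q1 x / M) + Q1 x * L := by
      rcases eq_or_lt_of_le (h1.1 x) with h | h
      · simp [← h]
      · rw [Real.log_div h.ne' hQx.ne', Real.log_div h.ne' hMpos.ne']; ring
    have e2 : Q2 x * Real.log (Q2 x / Q x) = Q2 x * Real.log (Q2 x / M) + Q2 x * L := by
      rcases eq_or_lt_of_le (h2.1 x) with h | h
      · simp [← h]
      · rw [Real.log_div h.ne' hQx.ne', Real.log_div h.ne' hMpos.ne']; ring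
    have hMsum : (1 + α) * M = α * Q1 x + Q2 x := by
      rw [hM]; unfold mix; field_simp
    rw [e1, e2, hMQ]
    linear_combination (-L) * hMsum
  · have hM0 : mix Q1 Q2 α x = 0 :=
      le_antisymm (not_lt.mp hMpos) (mix_nonneg hα h1.1 h2.1 x)
    have hq1 : Q1 x = 0 := by
      by_contra hc
      have := mix_pos_left hα h2.1 (lt_of_le_of_ne (h1.1 x) (Ne.symm hc)) (Q2 := Q2)
      rw [hM0] at this; exact lt_irrefl 0 this
    have hq2 : Q2 x = 0 := by
      by_contra hc
      have := mix_pos_right hα h1.1 (lt_of_le_of_ne (h2.1 x) (Ne.symm hc)) (Q1 := Q1)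
      rw [hM0] at this; exact lt_irrefl 0 this
    simp [hM0, hq1, hq2]

lemma gjs_div_anti {Q1 Q2 : 𝒳 → ℝ} {α β : ℝ} (h1 : IsPMF Q1) (h2 : IsPMF Q2)
    (hα : 0 < α) (hab : α ≤ β) :
    (1 / β) * GJS Q1 Q2 β ≤ (1 / α) * GJS Q1 Q2 α := by
  have hβ : 0 < β := lt_of_lt_of_le hα hab
  have hMpmf : IsPMF (mix Q1 Q2 α) := mix_pmf hα h1 h2
  have hKL2 : 0 ≤ KL Q2 (mix Q1 Q2 α) :=
    gibbs_s9 h2 hMpmf.1 hMpmf.2.le (fun x hx => mix_pos_right hα h1.1 hx)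
  have hKL1 : 0 ≤ KL Q1 (mix Q1 Q2 α) :=
    gibbs_s9 h1 hMpmf.1 hMpmf.2.le (fun x hx => mix_pos_left hα h2.1 hx)
  have hKLM : 0 ≤ KL (mix Q1 Q2 β) (mix Q1 Q2 α) :=
    gibbs_s9 (mix_pmf hβ h1 h2) hMpmf.1 hMpmf.2.le (mix_support hα hβ h1.1 h2.1)
  have hcomp := compensation (Q := mix Q1 Q2 α) hβ h1 h2 (mix_support hα hβ h1.1 h2.1)
  have hGJSb : GJS Q1 Q2 β ≤ β * KL Q1 (mix Q1 Q2 α) + KL Q2 (mix Q1 Q2 α) := by nlinarith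
  have hGJSa : (1 / α) * GJS Q1 Q2 α = KL Q1 (mix Q1 Q2 α) + (1 / α) * KL Q2 (mix Q1 Q2 α) := by
    unfold GJS; field_simp
  have step1 : (1 / β) * GJS Q1 Q2 β ≤ KL Q1 (mix Q1 Q2 α) + (1 / β) * KL Q2 (mix Q1 Q2 α) := by
    have := mul_le_mul_of_nonneg_left hGJSb (le_of_lt (one_div_pos.mpr hβ))
    calc (1 / β) * GJS Q1 Q2 β ≤ (1 / β) * (β * KL Q1 (mix Q1 Q2 α) + KL Q2 (mix Q1 Q2 α)) := this
      _ = KL Q1 (mix Q1 Q2 α) + (1 / β) * KL Q2 (mix Q1 Q2 α) := by field_simp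
  have step2 : (1 / β) * KL Q2 (mix Q1 Q2 α) ≤ (1 / α) * KL Q2 (mix Q1 Q2 α) := by
    apply mul_le_mul_of_nonneg_right _ hKL2
    exact one_div_le_one_div_of_le hα hab
  linarith [hGJSa]

lemma GJS_self {P : 𝒳 → ℝ} {α : ℝ} (hα : 0 < α) : GJS P P α = 0 := by
  have hmix : mix P P α = P := by
    funext x; unfold mix; field_simp; ring
  unfold GJS
  rw [hmix, KL_self_s9]
  ring

lemma F1_bddBelow (P1 P2 : 𝒳 → ℝ) (hP1 : IsPMF P1) (hP2 : IsPMF P2)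
    (hs1 : FullSupport P1) (hs2 : FullSupport P2) {α : ℝ} (hα : 0 < α) (lam : ℝ) :
    ∀ v ∈ {v : ℝ | ∃ Q1 Q2 : 𝒳 → ℝ, IsPMF Q1 ∧ IsPMF Q2 ∧
      (1 / α) * GJS Q1 Q2 α ≤ lam ∧ v = KL Q1 P1 + (1 / α) * KL Q2 P2}, (0:ℝ) ≤ v := by
  rintro v ⟨Q1, Q2, hQ1, hQ2, _, rfl⟩
  have g1 := gibbs_s9 hQ1 hP1.1 hP1.2.le (fun x _ => hs1 x)
  have g2 := gibbs_s9 hQ2 hP2.1 hP2.2.le (fun x _ => hs2 x)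
  have : 0 ≤ (1 / α) * KL Q2 P2 := mul_nonneg (by positivity) g2
  linarith

lemma F1_anti (P1 P2 : 𝒳 → ℝ) (hP1 : IsPMF P1) (hP2 : IsPMF P2)
    (hs1 : FullSupport P1) (hs2 : FullSupport P2) {α β lam : ℝ}
    (hα : 0 < α) (hab : α ≤ β) (hlam : 0 ≤ lam) :
    F1 P1 P2 β lam ≤ F1 P1 P2 α lam := by
  have hβ : 0 < β := lt_of_lt_of_le hα hab
  unfold F1
  apply le_csInf
  · exact ⟨KL P1 P1 + (1 / α) * KL P1 P2, P1, P1, hP1, hP1,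
      by rw [GJS_self hα]; simpa using hlam, rfl⟩
  · rintro v ⟨Q1, Q2, hQ1, hQ2, hcon, rfl⟩
    have hmem : KL Q1 P1 + (1 / β) * KL Q2 P2 ∈ {v : ℝ | ∃ Q1 Q2 : 𝒳 → ℝ, IsPMF Q1 ∧ IsPMF Q2 ∧
        (1 / β) * GJS Q1 Q2 β ≤ lam ∧ v = KL Q1 P1 + (1 / β) * KL Q2 P2} :=
      ⟨Q1, Q2, hQ1, hQ2, le_trans (gjs_div_anti hQ1 hQ2 hα hab) hcon, rfl⟩
    have hbdd : BddBelow {v : ℝ | ∃ Q1 Q2 : 𝒳 → ℝ, IsPMF Q1 ∧ IsPMF Q2 ∧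
        (1 / β) * GJS Q1 Q2 β ≤ lam ∧ v = KL Q1 P1 + (1 / β) * KL Q2 P2} :=
      ⟨0, F1_bddBelow P1 P2 hP1 hP2 hs1 hs2 hβ lam⟩
    refine le_trans (csInf_le hbdd hmem) ?_
    have g2 := gibbs_s9 hQ2 hP2.1 hP2.2.le (fun x _ => hs2 x)
    have : (1 / β) * KL Q2 P2 ≤ (1 / α) * KL Q2 P2 :=
      mul_le_mul_of_nonneg_right (one_div_le_one_div_of_le hα hab) g2
    linarith

lemma F1_le_bound (P1 P2 : 𝒳 → ℝ) (hP1 : IsPMF P1) (hP2 : IsPMF P2)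
    (hs1 : FullSupport P1) (hs2 : FullSupport P2) {α lam : ℝ} (hα : 0 < α) (hlam : 0 ≤ lam) :
    F1 P1 P2 α lam ≤ (1 / α) * KL P1 P2 := by
  unfold F1
  have hmem : (1 / α) * KL P1 P2 ∈ {v : ℝ | ∃ Q1 Q2 : 𝒳 → ℝ, IsPMF Q1 ∧ IsPMF Q2 ∧
      (1 / α) * GJS Q1 Q2 α ≤ lam ∧ v = KL Q1 P1 + (1 / α) * KL Q2 P2} :=
    ⟨P1, P1, hP1, hP1, by rw [GJS_self hα]; simpa using hlam, by rw [KL_self_s9]; ring⟩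
  exact csInf_le ⟨0, F1_bddBelow P1 P2 hP1 hP2 hs1 hs2 hα lam⟩ hmem

end AuxLemmas

theorem gutman_bayesian_exponent_antitone
    (P1 P2 : 𝒳 → ℝ) (hP1 : IsPMF P1) (hP2 : IsPMF P2)
    (hs1 : FullSupport P1) (hs2 : FullSupport P2) :
    AntitoneOn (gutmanBayes P1 P2) (Set.Ioi (0 : ℝ)) := by
  intro α hα β hβ hab
  simp only [Set.mem_Ioi] at hα hβ
  unfold gutmanBayes
  have hBdd : BddAbove {e : ℝ | ∃ lam : ℝ, 0 ≤ lam ∧ e = min lam (F1 P1 P2 α lam)} := by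
    refine ⟨(1 / α) * KL P1 P2, ?_⟩
    rintro e ⟨lam, hlam, rfl⟩
    exact le_trans (min_le_right _ _) (F1_le_bound P1 P2 hP1 hP2 hs1 hs2 hα hlam)
  apply csSup_le
  · exact ⟨min 0 (F1 P1 P2 β 0), 0, le_refl 0, rfl⟩
  · rintro e ⟨lam, hlam, rfl⟩
    have h1 : min lam (F1 P1 P2 β lam) ≤ min lam (F1 P1 P2 α lam) :=
      min_le_min (le_refl _) (F1_anti P1 P2 hP1 hP2 hs1 hs2 hα hab hlam)
    exact le_trans h1 (le_csSup hBdd ⟨lam, hlam, rfl⟩)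

end SeqClass
end

section
/- Let 𝒳 be a finite alphabet, let v^N ∈ 𝒳^N have type Q₁ and w^n ∈ 𝒳^n have type Q₂. Then for every P ∈ 𝒫(𝒳), the product probability satisfies P^{⊗(N+n)}(v^N, w^n) ≤ exp( −n·GJS(Q₁, Q₂, N/n) − N·H(Q₁) − n·H(Q₂) ), with equality when P = ((N/n)·Q₁ + Q₂)/(1 + N/n). In particular, the minimum over P ∈ 𝒫(𝒳) of −(1/n)·log P^{⊗(N+n)}(v^N, w^n) is bounded below by GJS(Q₁, Q₂, N/n) plus (N/n)·H(Q₁) + H(Q₂), attained at P = ((N/n)·Q₁ + Q₂)/(1 + N/n). -/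
open Filter

namespace SeqClass

variable {𝒳 : Type*} [Fintype 𝒳] [DecidableEq 𝒳]

lemma prodProb_eq_prod_pow {m : ℕ} (P : 𝒳 → ℝ) (x : Fin m → 𝒳) :
    prodProb P x = ∏ a, P a ^ (Finset.univ.filter fun i => x i = a).card := by
  rw [prodProb, ← Finset.prod_fiberwise' Finset.univ x P]
  exact Finset.prod_congr rfl fun a _ => by rw [Finset.prod_const]

lemma sum_card_fiber {m : ℕ} (x : Fin m → 𝒳) :
    ∑ a, (Finset.univ.filter fun i => x i = a).card = m := by
  have := Finset.card_eq_sum_card_fiberwise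
    (s := (Finset.univ : Finset (Fin m))) (t := Finset.univ) (f := x)
    (fun i _ => Finset.mem_univ (x i))
  simpa using this.symm

lemma log_helper (q m : ℝ) (h : q ≠ 0 → m ≠ 0) :
    q * Real.log q - q * Real.log (q / m) = q * Real.log m := by
  by_cases hq : q = 0
  · simp [hq]
  · rw [Real.log_div hq (h hq)]; ring

theorem product_probability_gjs_bound
    (N n : ℕ) (hN : 0 < N) (hn : 0 < n) (v : Fin N → 𝒳) (w : Fin n → 𝒳) :
    (∀ P : 𝒳 → ℝ, IsPMF P →
      prodProb P v * prodProb P w ≤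
        Real.exp (-(n : ℝ) * GJS (empDist v) (empDist w) ((N : ℝ) / n) -
          (N : ℝ) * shEnt (empDist v) - (n : ℝ) * shEnt (empDist w))) ∧
    prodProb (mix (empDist v) (empDist w) ((N : ℝ) / n)) v *
        prodProb (mix (empDist v) (empDist w) ((N : ℝ) / n)) w =
      Real.exp (-(n : ℝ) * GJS (empDist v) (empDist w) ((N : ℝ) / n) -
        (N : ℝ) * shEnt (empDist v) - (n : ℝ) * shEnt (empDist w)) := by
  classical
  have hN0 : (N : ℝ) ≠ 0 := Nat.cast_ne_zero.mpr hN.ne'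
  have hn0 : (n : ℝ) ≠ 0 := Nat.cast_ne_zero.mpr hn.ne'
  have hS0 : (N : ℝ) + n ≠ 0 := by positivity
  set cv : 𝒳 → ℕ := fun a => (Finset.univ.filter fun i => v i = a).card with hcv
  set cw : 𝒳 → ℕ := fun a => (Finset.univ.filter fun i => w i = a).card with hcw
  set Q1 := empDist v with hQ1
  set Q2 := empDist w with hQ2
  set α := (N : ℝ) / n with hα
  set M := mix Q1 Q2 α with hMdef
  have hQ1a : ∀ a, Q1 a = (cv a : ℝ) / N := fun a => rfl
  have hQ2a : ∀ a, Q2 a = (cw a : ℝ) / n := fun a => rfl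
  have hM : ∀ a, M a = ((cv a : ℝ) + cw a) / ((N : ℝ) + n) := by
    intro a
    rw [hMdef]
    simp only [mix, hQ1a, hQ2a, hα]
    field_simp
    ring
  have hMnn : ∀ a, 0 ≤ M a := by
    intro a; rw [hM a]; positivity
  have hMpos : ∀ a, cv a + cw a ≠ 0 → 0 < M a := by
    intro a h
    rw [hM a]
    apply div_pos _ (by positivity)
    have : 0 < cv a + cw a := Nat.pos_of_ne_zero h
    exact_mod_cast this
  have hsumv : ∑ a, cv a = N := sum_card_fiber v
  have hsumw : ∑ a, cw a = n := sum_card_fiber w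
  have hsumM : ∑ a, M a = 1 := by
    have : ∑ a, M a = (∑ a, ((cv a : ℝ) + cw a)) / ((N : ℝ) + n) := by
      rw [Finset.sum_div]
      exact Finset.sum_congr rfl fun a _ => hM a
    rw [this, Finset.sum_add_distrib, ← Nat.cast_sum, ← Nat.cast_sum, hsumv, hsumw,
      div_self hS0]
  -- the exponent identity
  have hexp : -(n : ℝ) * GJS Q1 Q2 α - (N : ℝ) * shEnt Q1 - (n : ℝ) * shEnt Q2
      = ∑ a, ((cv a : ℝ) + cw a) * Real.log (M a) := by
    have hterm : ∀ a, ((cv a : ℝ) + cw a) * Real.log (M a)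
        = (N : ℝ) * (Q1 a * Real.log (Q1 a) - Q1 a * Real.log (Q1 a / M a))
          + (n : ℝ) * (Q2 a * Real.log (Q2 a) - Q2 a * Real.log (Q2 a / M a)) := by
      intro a
      have h1 : Q1 a ≠ 0 → M a ≠ 0 := by
        intro h
        have : cv a ≠ 0 := by
          intro hc; apply h; rw [hQ1a, hc]; simp
        exact (hMpos a (by omega)).ne'
      have h2 : Q2 a ≠ 0 → M a ≠ 0 := by
        intro h
        have : cw a ≠ 0 := by
          intro hc; apply h; rw [hQ2a, hc]; simp
        exact (hMpos a (by omega)).ne'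
      rw [log_helper _ _ h1, log_helper _ _ h2, hQ1a, hQ2a]
      field_simp
    rw [Finset.sum_congr rfl fun a _ => hterm a, Finset.sum_add_distrib,
      ← Finset.mul_sum, ← Finset.mul_sum, Finset.sum_sub_distrib, Finset.sum_sub_distrib]
    simp only [GJS, KL, shEnt, ← hMdef, hα]
    field_simp
    ring
  -- exponential of the exponent as a product
  have hexpprod : Real.exp (∑ a, ((cv a : ℝ) + cw a) * Real.log (M a))
      = ∏ a, M a ^ (cv a + cw a) := by
    rw [Real.exp_sum]
    refine Finset.prod_congr rfl fun a _ => ?_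
    by_cases h : cv a + cw a = 0
    · obtain ⟨h1, h2⟩ := Nat.add_eq_zero.mp h
      simp [h1, h2]
    · have hMp : 0 < M a := hMpos a h
      have : ((cv a : ℝ) + cw a) = ((cv a + cw a : ℕ) : ℝ) := by push_cast; ring
      rw [this, Real.exp_nat_mul, Real.exp_log hMp]
  have hexpM : Real.exp (-(n : ℝ) * GJS Q1 Q2 α - (N : ℝ) * shEnt Q1 - (n : ℝ) * shEnt Q2)
      = ∏ a, M a ^ (cv a + cw a) := by rw [hexp, hexpprod]
  constructor
  · -- the inequality
    intro P hP
    rw [hexpM, prodProb_eq_prod_pow P v, prodProb_eq_prod_pow P w, ← Finset.prod_mul_distrib]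
    simp only [← pow_add, ← hcv, ← hcw]
    set z : 𝒳 → ℝ := fun a => if cv a + cw a = 0 then 0 else P a / M a with hz
    have hznn : ∀ a, 0 ≤ z a := by
      intro a
      rw [hz]
      dsimp only
      split
      · exact le_refl 0
      · exact div_nonneg (hP.1 a) (hMnn a)
    have hgm := Real.geom_mean_le_arith_mean_weighted Finset.univ M z
      (fun a _ => hMnn a) hsumM (fun a _ => hznn a)
    have h2 : ∑ a, M a * z a ≤ 1 := by
      rw [← hP.2]
      refine Finset.sum_le_sum fun a _ => ?_
      rw [hz]
      dsimp only
      split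
      · simpa using hP.1 a
      · rw [mul_div_cancel₀ _ (hMpos a (by assumption)).ne']
    have hY0 : 0 ≤ ∏ a, z a ^ M a :=
      Finset.prod_nonneg fun a _ => Real.rpow_nonneg (hznn a) _
    have hY1 : ∏ a, z a ^ M a ≤ 1 := hgm.trans h2
    have hpow : (∏ a, z a ^ M a) ^ (N + n) ≤ 1 := pow_le_one₀ hY0 hY1
    have hpow2 : (∏ a, z a ^ M a) ^ (N + n) = ∏ a, z a ^ (cv a + cw a) := by
      rw [← Finset.prod_pow]
      refine Finset.prod_congr rfl fun a _ => ?_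
      rw [← Real.rpow_natCast (z a ^ M a) (N + n), ← Real.rpow_mul (hznn a),
        ← Real.rpow_natCast (z a) (cv a + cw a)]
      congr 1
      rw [hM a]
      push_cast
      field_simp
    have hzfinal : ∏ a, z a ^ (cv a + cw a) ≤ 1 := by rw [← hpow2]; exact hpow
    have hsplit : ∏ a, P a ^ (cv a + cw a)
        = (∏ a, M a ^ (cv a + cw a)) * ∏ a, z a ^ (cv a + cw a) := by
      rw [← Finset.prod_mul_distrib]
      refine Finset.prod_congr rfl fun a _ => ?_
      by_cases h : cv a + cw a = 0
      · simp [h]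
      · rw [hz]
        dsimp only
        rw [if_neg h, ← mul_pow, mul_div_cancel₀ _ (hMpos a h).ne']
    calc ∏ a, P a ^ (cv a + cw a)
        = (∏ a, M a ^ (cv a + cw a)) * ∏ a, z a ^ (cv a + cw a) := hsplit
      _ ≤ (∏ a, M a ^ (cv a + cw a)) * 1 := by
          refine mul_le_mul_of_nonneg_left hzfinal ?_
          exact Finset.prod_nonneg fun a _ => pow_nonneg (hMnn a) _
      _ = ∏ a, M a ^ (cv a + cw a) := mul_one _
  · -- the equality case
    rw [hexpM, prodProb_eq_prod_pow M v, prodProb_eq_prod_pow M w, ← Finset.prod_mul_distrib]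
    simp only [← pow_add, ← hcv, ← hcw]
    rfl

end SeqClass
end

section
/- Let 𝒳 be a finite alphabet and let P, Q ∈ 𝒫(𝒳) have full support. Then the function α ↦ GJS(P, Q, α) on [0,∞) is concave, its derivative at each α ≥ 0 equals D( P ‖ (αP+Q)/(1+α) ), and lim_{α→∞} GJS(P, Q, α) = D(Q‖P). -/
open Filter

namespace SeqClass

variable {𝒳 : Type*} [Fintype 𝒳] [DecidableEq 𝒳]

lemma eventually_pos (P Q : 𝒳 → ℝ) (hsP : FullSupport P) (hsQ : FullSupport Q) {α : ℝ}
    (hα : 0 ≤ α) : ∀ᶠ a in nhds α, 0 < 1 + a ∧ ∀ x, 0 < a * P x + Q x := by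
  have hopen : IsOpen {a : ℝ | 0 < 1 + a ∧ ∀ x, 0 < a * P x + Q x} := by
    have h1 : IsOpen {a : ℝ | 0 < 1 + a} :=
      isOpen_lt continuous_const (continuous_const.add continuous_id)
    have h2 : IsOpen {a : ℝ | ∀ x, 0 < a * P x + Q x} := by
      rw [Set.setOf_forall]
      exact isOpen_iInter_of_finite fun x =>
        isOpen_lt continuous_const ((continuous_id.mul continuous_const).add continuous_const)
    exact h1.inter h2
  exact hopen.mem_nhds ⟨by linarith, fun x => by nlinarith [hsP x, hsQ x, mul_nonneg hα (hsP x).le]⟩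

lemma gjs_eq (P Q : 𝒳 → ℝ) (hsP : FullSupport P) (hsQ : FullSupport Q) {α : ℝ}
    (h1 : 0 < 1 + α) (h2 : ∀ x, 0 < α * P x + Q x) :
    GJS P Q α = KL Q P - ∑ x, (α * P x + Q x) *
      (Real.log (α * P x + Q x) - Real.log (1 + α) - Real.log (P x)) := by
  unfold GJS KL mix
  rw [Finset.mul_sum, ← Finset.sum_add_distrib, ← Finset.sum_sub_distrib]
  refine Finset.sum_congr rfl fun x _ => ?_
  have hp := hsP x; have hq := hsQ x; have h2x := h2 x
  have hmix : (0:ℝ) < (α * P x + Q x) / (1 + α) := div_pos h2x h1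
  rw [Real.log_div hp.ne' hmix.ne', Real.log_div hq.ne' hmix.ne',
    Real.log_div hq.ne' hp.ne', Real.log_div h2x.ne' h1.ne']
  ring

lemma hasDerivAt_term (p q : ℝ) {α : ℝ} (h1 : 0 < 1 + α) (h2 : 0 < α * p + q) :
    HasDerivAt (fun a : ℝ => (a * p + q) * (Real.log (a * p + q) - Real.log (1 + a) - Real.log p))
      (p * (Real.log (α * p + q) - Real.log (1 + α) - Real.log p) + (p - q) / (1 + α)) α := by
  have hlin : HasDerivAt (fun a : ℝ => a * p + q) p α := by
    simpa using ((hasDerivAt_id α).mul_const p).add_const q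
  have hlog1 : HasDerivAt (fun a : ℝ => Real.log (a * p + q)) (p / (α * p + q)) α :=
    hlin.log h2.ne'
  have hlog2 : HasDerivAt (fun a : ℝ => Real.log (1 + a)) (1 / (1 + α)) α := by
    simpa using ((hasDerivAt_id α).const_add 1).log h1.ne'
  have h := hlin.fun_mul ((hlog1.fun_sub hlog2).sub_const (Real.log p))
  convert h using 1
  · rfl
  · rfl
  rw [mul_sub (α * p + q), show (α * p + q) * (p / (α * p + q)) = p by field_simp]
  field_simp
  ring

lemma klmix_eq (P Q : 𝒳 → ℝ) (hsP : FullSupport P) {α : ℝ}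
    (h1 : 0 < 1 + α) (h2 : ∀ x, 0 < α * P x + Q x) :
    KL P (mix P Q α) = ∑ x, P x *
      (Real.log (P x) - Real.log (α * P x + Q x) + Real.log (1 + α)) := by
  unfold KL mix
  refine Finset.sum_congr rfl fun x _ => ?_
  rw [Real.log_div (hsP x).ne' (div_pos (h2 x) h1).ne', Real.log_div (h2 x).ne' h1.ne']
  ring

lemma hasDerivAt_gjs (P Q : 𝒳 → ℝ) (hP : IsPMF P) (hQ : IsPMF Q)
    (hsP : FullSupport P) (hsQ : FullSupport Q) {α : ℝ} (hα : 0 ≤ α) :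
    HasDerivAt (fun a : ℝ => GJS P Q a) (KL P (mix P Q α)) α := by
  have h1 : 0 < 1 + α := by linarith
  have h2 : ∀ x, 0 < α * P x + Q x := fun x => by
    nlinarith [hsP x, hsQ x, mul_nonneg hα (hsP x).le]
  have hsum : HasDerivAt (fun a : ℝ => ∑ x, (a * P x + Q x) *
      (Real.log (a * P x + Q x) - Real.log (1 + a) - Real.log (P x)))
      (∑ x, (P x * (Real.log (α * P x + Q x) - Real.log (1 + α) - Real.log (P x))
        + (P x - Q x) / (1 + α))) α :=
    HasDerivAt.fun_sum fun x _ => hasDerivAt_term (P x) (Q x) h1 (h2 x)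
  have hF := hsum.const_sub (KL Q P)
  have hval : KL P (mix P Q α) = -(∑ x, (P x *
      (Real.log (α * P x + Q x) - Real.log (1 + α) - Real.log (P x))
        + (P x - Q x) / (1 + α))) := by
    have hz : ∑ x, (P x - Q x) / (1 + α) = 0 := by
      rw [← Finset.sum_div, Finset.sum_sub_distrib, hP.2, hQ.2]
      simp
    rw [Finset.sum_add_distrib, hz, add_zero, klmix_eq P Q hsP h1 h2, ← Finset.sum_neg_distrib]
    exact Finset.sum_congr rfl fun x _ => by ring
  rw [← hval] at hF
  refine hF.congr_of_eventuallyEq ?_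
  filter_upwards [eventually_pos P Q hsP hsQ hα] with a ha
  exact gjs_eq P Q hsP hsQ ha.1 ha.2

lemma hasDerivAt_klmix (P Q : 𝒳 → ℝ) (hP : IsPMF P)
    (hsP : FullSupport P) (hsQ : FullSupport Q) {α : ℝ} (hα : 0 ≤ α) :
    HasDerivAt (fun a : ℝ => KL P (mix P Q a))
      (1 / (1 + α) - ∑ x, P x ^ 2 / (α * P x + Q x)) α := by
  have h1 : 0 < 1 + α := by linarith
  have h2 : ∀ x, 0 < α * P x + Q x := fun x => by
    nlinarith [hsP x, hsQ x, mul_nonneg hα (hsP x).le]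
  have hsum : HasDerivAt (fun a : ℝ => ∑ x, P x *
      (Real.log (P x) - Real.log (a * P x + Q x) + Real.log (1 + a)))
      (∑ x, P x * (0 - P x / (α * P x + Q x) + 1 / (1 + α))) α := by
    refine HasDerivAt.fun_sum fun x _ => ?_
    have hlin : HasDerivAt (fun a : ℝ => a * P x + Q x) (P x) α := by
      simpa using ((hasDerivAt_id α).mul_const (P x)).add_const (Q x)
    have hlog1 : HasDerivAt (fun a : ℝ => Real.log (a * P x + Q x))
        (P x / (α * P x + Q x)) α := hlin.log (h2 x).ne'
    have hlog2 : HasDerivAt (fun a : ℝ => Real.log (1 + a)) (1 / (1 + α)) α := by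
      simpa using ((hasDerivAt_id α).const_add 1).log h1.ne'
    exact (((hasDerivAt_const α (Real.log (P x))).sub hlog1).add hlog2).const_mul (P x)
  have heq : ∑ x, P x * (0 - P x / (α * P x + Q x) + 1 / (1 + α))
      = 1 / (1 + α) - ∑ x, P x ^ 2 / (α * P x + Q x) := by
    have hterm : ∀ x : 𝒳, P x * (0 - P x / (α * P x + Q x) + 1 / (1 + α))
        = P x * (1 / (1 + α)) - P x ^ 2 / (α * P x + Q x) := fun x => by
      field_simp [(h2 x).ne']
      ring
    rw [Finset.sum_congr rfl fun x _ => hterm x, Finset.sum_sub_distrib,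
      ← Finset.sum_mul, hP.2, one_mul]
  rw [heq] at hsum
  refine hsum.congr_of_eventuallyEq ?_
  filter_upwards [eventually_pos P Q hsP hsQ hα] with a ha
  exact klmix_eq P Q hsP ha.1 ha.2

lemma gjs_concave (P Q : 𝒳 → ℝ) (hP : IsPMF P) (hQ : IsPMF Q) (hsP : FullSupport P) (hsQ : FullSupport Q) : ConcaveOn ℝ (Set.Ici (0 : ℝ)) (fun α => GJS P Q α) := by
  have hd : ∀ a : ℝ, 0 ≤ a → HasDerivAt (fun α => GJS P Q α) (KL P (mix P Q a)) a :=
    fun a ha => hasDerivAt_gjs P Q hP hQ hsP hsQ ha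
  refine AntitoneOn.concaveOn_of_deriv (convex_Ici 0) ?_ ?_ ?_
  · exact fun a ha => (hd a ha).continuousAt.continuousWithinAt
  · intro a ha
    rw [interior_Ici] at ha
    exact (hd a ha.le).differentiableAt.differentiableWithinAt
  · have hK : AntitoneOn (fun a : ℝ => KL P (mix P Q a)) (Set.Ici 0) := by
      refine antitoneOn_of_deriv_nonpos (convex_Ici 0) ?_ ?_ ?_
      · exact fun a ha => (hasDerivAt_klmix P Q hP hsP hsQ ha).continuousAt.continuousWithinAt
      · intro a ha
        rw [interior_Ici] at ha
        exact (hasDerivAt_klmix P Q hP hsP hsQ ha.le).differentiableAt.differentiableWithinAt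
      · intro a ha
        rw [interior_Ici] at ha
        rw [(hasDerivAt_klmix P Q hP hsP hsQ ha.le).deriv]
        have h1 : (0:ℝ) < 1 + a := by have := Set.mem_Ioi.mp ha; linarith
        have h2 : ∀ x, 0 < a * P x + Q x := fun x => by
          nlinarith [hsP x, hsQ x, mul_nonneg ha.le (hsP x).le]
        have hcs := Finset.sq_sum_div_le_sum_sq_div Finset.univ P
          (g := fun x => a * P x + Q x) (fun x _ => h2 x)
        have hsum : ∑ x, (a * P x + Q x) = 1 + a := by
          rw [Finset.sum_add_distrib, ← Finset.mul_sum, hP.2, hQ.2]; ring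
        rw [hP.2, hsum, one_pow] at hcs
        linarith
    intro a ha b hb hab
    rw [interior_Ici] at ha hb
    rw [(hd a ha.le).deriv, (hd b hb.le).deriv]
    exact hK (Set.mem_Ioi.mp ha).le (Set.mem_Ioi.mp hb).le hab

lemma gjs_limit (P Q : 𝒳 → ℝ) (hP : IsPMF P) (hQ : IsPMF Q) (hsP : FullSupport P) (hsQ : FullSupport Q) : Filter.Tendsto (fun α : ℝ => GJS P Q α) Filter.atTop (nhds (KL Q P)) := by
  have hterm : ∀ x : 𝒳, Tendsto (fun α : ℝ => (α * P x + Q x) *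
      (Real.log (α * P x + Q x) - Real.log (1 + α) - Real.log (P x))) atTop
      (nhds (Q x - P x)) := by
    intro x
    have hp : 0 < P x := hsP x
    have hq : 0 < Q x := hsQ x
    have hv : Tendsto (fun α : ℝ => (1 + α) * P x) atTop atTop :=
      (tendsto_atTop_add_const_left _ 1 tendsto_id).atTop_mul_const hp
    have h2 : Tendsto (fun α : ℝ => ((1 + α) * P x) *
        Real.log (1 + (Q x - P x) / ((1 + α) * P x))) atTop (nhds (Q x - P x)) :=
      (Real.tendsto_mul_log_one_add_div_atTop (Q x - P x)).comp hv
    have h1 : Tendsto (fun α : ℝ => (α * P x + Q x) / ((1 + α) * P x)) atTop (nhds 1) := by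
      have h0 : Tendsto (fun α : ℝ => 1 + (Q x - P x) / ((1 + α) * P x)) atTop
          (nhds (1 + 0)) := tendsto_const_nhds.add (Tendsto.div_atTop tendsto_const_nhds hv)
      rw [add_zero] at h0
      refine h0.congr' ?_
      filter_upwards [eventually_ge_atTop (0:ℝ)] with α hα
      have h1a : (0:ℝ) < 1 + α := by linarith
      have hvp : (0:ℝ) < (1 + α) * P x := mul_pos h1a hp
      field_simp
      ring
    have hmain := h1.mul h2
    rw [one_mul] at hmain
    refine Tendsto.congr' ?_ hmain
    filter_upwards [eventually_ge_atTop (0:ℝ)] with α hα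
    have h1a : (0:ℝ) < 1 + α := by linarith
    have h2a : (0:ℝ) < α * P x + Q x := by nlinarith
    have hvp : (0:ℝ) < (1 + α) * P x := mul_pos h1a hp
    have harg : 1 + (Q x - P x) / ((1 + α) * P x) = (α * P x + Q x) / ((1 + α) * P x) := by
      field_simp; ring
    rw [harg, Real.log_div h2a.ne' hvp.ne', Real.log_mul h1a.ne' hp.ne']
    field_simp
    ring
  have hsumlim : Tendsto (fun α : ℝ => ∑ x, (α * P x + Q x) *
      (Real.log (α * P x + Q x) - Real.log (1 + α) - Real.log (P x))) atTop
      (nhds (∑ x, (Q x - P x))) := tendsto_finset_sum _ fun x _ => hterm x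
  have hz : ∑ x, (Q x - P x) = (0:ℝ) := by
    rw [Finset.sum_sub_distrib, hP.2, hQ.2]; ring
  rw [hz] at hsumlim
  have hfinal := tendsto_const_nhds (α := ℝ) (f := atTop) (x := KL Q P) |>.sub hsumlim
  rw [sub_zero] at hfinal
  refine Tendsto.congr' ?_ hfinal
  filter_upwards [eventually_ge_atTop (0:ℝ)] with α hα
  exact (gjs_eq P Q hsP hsQ (by linarith) (fun x => by
    nlinarith [hsP x, hsQ x, mul_nonneg hα (hsP x).le])).symm

theorem gjs_concave_deriv_and_limit
    (P Q : 𝒳 → ℝ) (hP : IsPMF P) (hQ : IsPMF Q)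
    (hsP : FullSupport P) (hsQ : FullSupport Q) :
    ConcaveOn ℝ (Set.Ici (0 : ℝ)) (fun α => GJS P Q α) ∧
    (∀ α : ℝ, 0 ≤ α → HasDerivAt (fun a : ℝ => GJS P Q a) (KL P (mix P Q α)) α) ∧
    Filter.Tendsto (fun α : ℝ => GJS P Q α) Filter.atTop (nhds (KL Q P)) := by
  exact ⟨gjs_concave P Q hP hQ hsP hsQ,
    fun α hα => hasDerivAt_gjs P Q hP hQ hsP hsQ hα,
    gjs_limit P Q hP hQ hsP hsQ⟩

end SeqClass
end

section
/- Let 𝒳 be a finite alphabet and fix α ≥ 0. Then the map (P, Q) ↦ GJS(P, Q, α) is jointly convex on 𝒫(𝒳) × 𝒫(𝒳): for all pairs (P₁,Q₁), (P₂,Q₂) of probability mass functions with full support and all θ ∈ [0,1], GJS(θP₁+(1−θ)P₂, θQ₁+(1−θ)Q₂, α) ≤ θ·GJS(P₁,Q₁,α) + (1−θ)·GJS(P₂,Q₂,α). -/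
open Filter

namespace SeqClass

variable {𝒳 : Type*} [Fintype 𝒳] [DecidableEq 𝒳]

private lemma logsum2 {a1 a2 b1 b2 θ : ℝ} (ha1 : 0 ≤ a1) (ha2 : 0 ≤ a2)
    (hb1 : 0 < b1) (hb2 : 0 < b2) (hθ : 0 ≤ θ) (hθ1 : θ ≤ 1) :
    (θ * a1 + (1 - θ) * a2) * Real.log ((θ * a1 + (1 - θ) * a2) / (θ * b1 + (1 - θ) * b2)) ≤
      θ * (a1 * Real.log (a1 / b1)) + (1 - θ) * (a2 * Real.log (a2 / b2)) := by
  have hb : 0 < θ * b1 + (1 - θ) * b2 := by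
    rcases lt_or_ge θ 1 with h | h
    · nlinarith [mul_nonneg hθ hb1.le, mul_pos (by linarith : (0:ℝ) < 1 - θ) hb2]
    · have : θ = 1 := le_antisymm hθ1 h
      subst this; nlinarith
  set b := θ * b1 + (1 - θ) * b2 with hbdef
  have hw1 : 0 ≤ θ * b1 / b := div_nonneg (mul_nonneg hθ hb1.le) hb.le
  have hw2 : 0 ≤ (1 - θ) * b2 / b :=
    div_nonneg (mul_nonneg (by linarith) hb2.le) hb.le
  have hwsum : θ * b1 / b + (1 - θ) * b2 / b = 1 := by field_simp; exact hbdef.symm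
  have hx1 : a1 / b1 ∈ Set.Ici (0 : ℝ) := Set.mem_Ici.2 (by positivity)
  have hx2 : a2 / b2 ∈ Set.Ici (0 : ℝ) := Set.mem_Ici.2 (by positivity)
  have hconv := Real.convexOn_mul_log.2 hx1 hx2 hw1 hw2 hwsum
  simp only [smul_eq_mul] at hconv
  have harg : θ * b1 / b * (a1 / b1) + (1 - θ) * b2 / b * (a2 / b2)
      = (θ * a1 + (1 - θ) * a2) / b := by
    field_simp
  rw [harg] at hconv
  have hmul := mul_le_mul_of_nonneg_left hconv hb.le
  calc (θ * a1 + (1 - θ) * a2) * Real.log ((θ * a1 + (1 - θ) * a2) / b)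
      = b * ((θ * a1 + (1 - θ) * a2) / b *
          Real.log ((θ * a1 + (1 - θ) * a2) / b)) := by field_simp
    _ ≤ b * (θ * b1 / b * (a1 / b1 * Real.log (a1 / b1)) +
          (1 - θ) * b2 / b * (a2 / b2 * Real.log (a2 / b2))) := hmul
    _ = θ * (a1 * Real.log (a1 / b1)) + (1 - θ) * (a2 * Real.log (a2 / b2)) := by
        field_simp

theorem gjs_jointly_convex (α : ℝ) (hα : 0 ≤ α) :
    ∀ P1 Q1 P2 Q2 : 𝒳 → ℝ, IsPMF P1 → IsPMF Q1 → IsPMF P2 → IsPMF Q2 →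
      FullSupport P1 → FullSupport Q1 → FullSupport P2 → FullSupport Q2 →
      ∀ θ : ℝ, θ ∈ Set.Icc (0 : ℝ) 1 →
        GJS (fun x => θ * P1 x + (1 - θ) * P2 x) (fun x => θ * Q1 x + (1 - θ) * Q2 x) α ≤
          θ * GJS P1 Q1 α + (1 - θ) * GJS P2 Q2 α := by
  intro P1 Q1 P2 Q2 _ _ _ _ hP1 hQ1 hP2 hQ2 θ hθmem
  obtain ⟨hθ, hθ1⟩ := hθmem
  have h1α : (0 : ℝ) < 1 + α := by linarith
  have hGJS : ∀ P Q : 𝒳 → ℝ, GJS P Q α =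
      ∑ x, (α * (P x * Real.log (P x / mix P Q α x)) +
        Q x * Real.log (Q x / mix P Q α x)) := by
    intro P Q
    simp [GJS, KL, Finset.mul_sum, Finset.sum_add_distrib]
  rw [hGJS, hGJS, hGJS, Finset.mul_sum, Finset.mul_sum, ← Finset.sum_add_distrib]
  apply Finset.sum_le_sum
  intro x _
  have hm1 : 0 < mix P1 Q1 α x := by
    have := hP1 x; have := hQ1 x
    apply div_pos (by nlinarith) h1α
  have hm2 : 0 < mix P2 Q2 α x := by
    have := hP2 x; have := hQ2 x
    apply div_pos (by nlinarith) h1α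
  have hmθ : mix (fun x => θ * P1 x + (1 - θ) * P2 x)
      (fun x => θ * Q1 x + (1 - θ) * Q2 x) α x
      = θ * mix P1 Q1 α x + (1 - θ) * mix P2 Q2 α x := by
    simp only [mix]; field_simp; ring
  rw [hmθ]
  have hIneqP := logsum2 (hP1 x).le (hP2 x).le hm1 hm2 hθ hθ1
  have hIneqQ := logsum2 (hQ1 x).le (hQ2 x).le hm1 hm2 hθ hθ1
  have := mul_le_mul_of_nonneg_left hIneqP hα
  nlinarith [this, hIneqQ]

end SeqClass
end

section
/- Let 𝒳 be a finite alphabet, let P, Q ∈ 𝒫(𝒳) have full support, and let λ > 0. Then the equation GJS(P, Q, α) = λα has a solution α > 0 if and only if λ < D(P‖Q), and when a positive solution exists it is unique. -/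
open Filter

namespace SeqClass

variable {𝒳 : Type*} [Fintype 𝒳] [DecidableEq 𝒳]

open Real Set
set_option linter.unusedSectionVars false
set_option linter.unusedVariables false

section Aux

variable (P Q : 𝒳 → ℝ)

lemma KL_eq_sum (hsP : FullSupport P) (R : 𝒳 → ℝ) (hR : ∀ x, 0 < R x) :
    KL P R = ∑ x, P x * (Real.log (P x) - Real.log (R x)) := by
  unfold KL
  refine Finset.sum_congr rfl fun x _ => ?_
  rw [Real.log_div (hsP x).ne' (hR x).ne']

lemma gibbs_pos (hP : IsPMF P) (hsP : FullSupport P) (R : 𝒳 → ℝ)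
    (hR : ∀ x, 0 < R x) (hRsum : ∑ x, R x = 1) (hne : R ≠ P) : 0 < KL P R := by
  obtain ⟨x₀, hx₀⟩ : ∃ x, R x ≠ P x := by
    by_contra h; push_neg at h; exact hne (funext h)
  have key : ∑ x, P x * Real.log (R x / P x) < 0 := by
    have hle : ∀ x ∈ Finset.univ, P x * Real.log (R x / P x) ≤ R x - P x := by
      intro x _
      have h1 : Real.log (R x / P x) ≤ R x / P x - 1 :=
        Real.log_le_sub_one_of_pos (div_pos (hR x) (hsP x))
      have h2 : P x * (R x / P x - 1) = R x - P x := by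
        rw [mul_sub, mul_div_cancel₀ _ (hsP x).ne', mul_one]
      calc P x * Real.log (R x / P x) ≤ P x * (R x / P x - 1) :=
            mul_le_mul_of_nonneg_left h1 (hsP x).le
        _ = R x - P x := h2
    have hlt : P x₀ * Real.log (R x₀ / P x₀) < R x₀ - P x₀ := by
      have hne1 : R x₀ / P x₀ ≠ 1 := by
        intro h
        exact hx₀ ((div_eq_one_iff_eq (hsP x₀).ne').mp h)
      have h1 : Real.log (R x₀ / P x₀) < R x₀ / P x₀ - 1 :=
        Real.log_lt_sub_one_of_pos (div_pos (hR x₀) (hsP x₀)) hne1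
      have h2 : P x₀ * (R x₀ / P x₀ - 1) = R x₀ - P x₀ := by
        rw [mul_sub, mul_div_cancel₀ _ (hsP x₀).ne', mul_one]
      calc P x₀ * Real.log (R x₀ / P x₀) < P x₀ * (R x₀ / P x₀ - 1) :=
            mul_lt_mul_of_pos_left h1 (hsP x₀)
        _ = R x₀ - P x₀ := h2
    calc ∑ x, P x * Real.log (R x / P x)
        < ∑ x, (R x - P x) := Finset.sum_lt_sum hle ⟨x₀, Finset.mem_univ _, hlt⟩
      _ = 0 := by rw [Finset.sum_sub_distrib, hRsum, hP.2, sub_self]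
  have heq : KL P R = -∑ x, P x * Real.log (R x / P x) := by
    rw [← Finset.sum_neg_distrib]
    unfold KL
    refine Finset.sum_congr rfl fun x _ => ?_
    rw [Real.log_div (hR x).ne' (hsP x).ne', Real.log_div (hsP x).ne' (hR x).ne']
    ring
  rw [heq]; linarith

lemma mix_pos_s15 (hsP : FullSupport P) (hsQ : FullSupport Q) {a : ℝ} (ha : 0 ≤ a) (x : 𝒳) :
    0 < mix P Q a x := by
  unfold mix
  have h1 : 0 < a * P x + Q x := by
    have := mul_nonneg ha (hsP x).le
    linarith [hsQ x]
  have h2 : (0:ℝ) < 1 + a := by linarith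
  exact div_pos h1 h2

lemma sum_mix (hP : IsPMF P) (hQ : IsPMF Q) {a : ℝ} (h1 : (0:ℝ) < 1 + a) :
    ∑ x, mix P Q a x = 1 := by
  unfold mix
  rw [← Finset.sum_div, Finset.sum_add_distrib, ← Finset.mul_sum, hP.2, hQ.2]
  field_simp
  ring

lemma mix_ne (hne : P ≠ Q) {a : ℝ} (h1 : (0:ℝ) < 1 + a) : mix P Q a ≠ P := by
  obtain ⟨x₀, hx₀⟩ : ∃ x, P x ≠ Q x := by
    by_contra h; push_neg at h; exact hne (funext h)
  intro h
  apply hx₀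
  have := congrFun h x₀
  unfold mix at this
  field_simp at this
  linarith

lemma kl_mix_strict_anti (hP : IsPMF P) (hQ : IsPMF Q) (hsP : FullSupport P)
    (hsQ : FullSupport Q) (hne : P ≠ Q) {a b : ℝ} (ha : 0 ≤ a) (hab : a < b) :
    KL P (mix P Q b) < KL P (mix P Q a) := by
  have hb : 0 ≤ b := le_of_lt (lt_of_le_of_lt ha hab)
  have h1a : (0:ℝ) < 1 + a := by linarith
  have h1b : (0:ℝ) < 1 + b := by linarith
  set t : ℝ := (b - a) / (1 + b) with ht_def
  have ht0 : 0 < t := div_pos (by linarith) h1b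
  have ht1 : t < 1 := by
    rw [ht_def, div_lt_one h1b]; linarith
  have hmixid : ∀ x, mix P Q b x = t * P x + (1 - t) * mix P Q a x := by
    intro x
    unfold mix
    rw [ht_def]
    field_simp
    ring
  have hKpos : 0 < KL P (mix P Q a) :=
    gibbs_pos P hP hsP _ (mix_pos_s15 P Q hsP hsQ ha) (sum_mix P Q hP hQ h1a)
      (mix_ne P Q hne h1a)
  have hlog : ∀ x, t * Real.log (P x) + (1 - t) * Real.log (mix P Q a x)
      ≤ Real.log (mix P Q b x) := by
    intro x
    have := strictConcaveOn_log_Ioi.concaveOn.2 (Set.mem_Ioi.mpr (hsP x))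
      (Set.mem_Ioi.mpr (mix_pos_s15 P Q hsP hsQ ha x)) ht0.le (by linarith : 0 ≤ 1 - t)
      (by ring)
    rw [smul_eq_mul, smul_eq_mul, smul_eq_mul, smul_eq_mul] at this
    rw [hmixid x]
    exact this
  have hsum : KL P (mix P Q b) ≤ (1 - t) * KL P (mix P Q a) := by
    rw [KL_eq_sum P hsP _ (mix_pos_s15 P Q hsP hsQ hb), KL_eq_sum P hsP _ (mix_pos_s15 P Q hsP hsQ ha),
      Finset.mul_sum]
    refine Finset.sum_le_sum fun x _ => ?_
    have h := hlog x
    have hP' := (hsP x).le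
    nlinarith [hsP x, h]
  have : (1 - t) * KL P (mix P Q a) < KL P (mix P Q a) := by nlinarith
  linarith

noncomputable def Gfun (P Q : 𝒳 → ℝ) (a : ℝ) : ℝ :=
  ∑ x, (a * P x * Real.log (P x) + Q x * Real.log (Q x)
    - (a * P x + Q x) * (Real.log (a * P x + Q x) - Real.log (1 + a)))

lemma GJS_eq_Gfun (hsP : FullSupport P) (hsQ : FullSupport Q) {a : ℝ}
    (h1 : (0:ℝ) < 1 + a) (h2 : ∀ x, 0 < a * P x + Q x) :
    GJS P Q a = Gfun P Q a := by
  unfold GJS KL Gfun mix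
  rw [Finset.mul_sum, ← Finset.sum_add_distrib]
  refine Finset.sum_congr rfl fun x _ => ?_
  have hm : (a * P x + Q x) / (1 + a) ≠ 0 := (div_pos (h2 x) h1).ne'
  rw [Real.log_div (hsP x).ne' hm, Real.log_div (hsQ x).ne' hm,
    Real.log_div (h2 x).ne' h1.ne']
  ring

lemma hasDerivAt_Gfun {a : ℝ} (h1 : (1:ℝ) + a ≠ 0) (h2 : ∀ x, a * P x + Q x ≠ 0) :
    HasDerivAt (Gfun P Q)
      (∑ x, (P x * Real.log (P x)
        - (P x * (Real.log (a * P x + Q x) - Real.log (1 + a))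
          + (a * P x + Q x) * (P x / (a * P x + Q x) - 1 / (1 + a))))) a := by
  unfold Gfun
  apply HasDerivAt.fun_sum
  intro x _
  have hu : HasDerivAt (fun a : ℝ => a * P x + Q x) (P x) a := by
    simpa using ((hasDerivAt_id a).mul_const (P x)).add_const (Q x)
  have hw : HasDerivAt (fun a : ℝ => 1 + a) (1:ℝ) a := by
    simpa using (hasDerivAt_id a).const_add (1:ℝ)
  have hv : HasDerivAt (fun a : ℝ => Real.log (a * P x + Q x) - Real.log (1 + a))
      (P x / (a * P x + Q x) - 1 / (1 + a)) a := by
    have l1 := hu.log (h2 x)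
    have l2 := hw.log h1
    simpa using l1.fun_sub l2
  have t0 : HasDerivAt (fun a : ℝ => a * P x * Real.log (P x)) (P x * Real.log (P x)) a := by
    simpa [mul_assoc] using (hasDerivAt_id a).mul_const (P x * Real.log (P x))
  have t1 : HasDerivAt (fun a : ℝ => a * P x * Real.log (P x) + Q x * Real.log (Q x))
      (P x * Real.log (P x)) a := t0.add_const _
  exact t1.sub (hu.mul hv)

lemma derivVal_eq (hP : IsPMF P) (hQ : IsPMF Q) (hsP : FullSupport P) (hsQ : FullSupport Q)
    {a : ℝ} (h1 : (0:ℝ) < 1 + a) (h2 : ∀ x, 0 < a * P x + Q x) :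
    (∑ x, (P x * Real.log (P x)
        - (P x * (Real.log (a * P x + Q x) - Real.log (1 + a))
          + (a * P x + Q x) * (P x / (a * P x + Q x) - 1 / (1 + a)))))
      = KL P (mix P Q a) := by
  have hmpos : ∀ x, 0 < mix P Q a x := fun x => div_pos (h2 x) h1
  rw [KL_eq_sum P hsP _ hmpos]
  have key : ∀ x : 𝒳, P x * Real.log (P x)
        - (P x * (Real.log (a * P x + Q x) - Real.log (1 + a))
          + (a * P x + Q x) * (P x / (a * P x + Q x) - 1 / (1 + a)))
      = P x * (Real.log (P x) - Real.log (mix P Q a x)) + (mix P Q a x - P x) := by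
    intro x
    have e1 : (a * P x + Q x) * (P x / (a * P x + Q x) - 1 / (1 + a))
        = P x - (a * P x + Q x) / (1 + a) := by
      have hu0 : a * P x + Q x ≠ 0 := (h2 x).ne'
      have h10 : (1:ℝ) + a ≠ 0 := h1.ne'
      field_simp
    unfold mix
    rw [Real.log_div (h2 x).ne' h1.ne', e1]
    ring
  rw [Finset.sum_congr rfl fun x _ => key x, Finset.sum_add_distrib,
    Finset.sum_sub_distrib, sum_mix P Q hP hQ h1, hP.2]
  ring

lemma hasDerivAt_GJS (hP : IsPMF P) (hQ : IsPMF Q) (hsP : FullSupport P)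
    (hsQ : FullSupport Q) {a : ℝ} (ha : 0 ≤ a) :
    HasDerivAt (GJS P Q) (KL P (mix P Q a)) a := by
  have hopen : IsOpen {b : ℝ | 0 < 1 + b ∧ ∀ x, 0 < b * P x + Q x} := by
    have : {b : ℝ | 0 < 1 + b ∧ ∀ x, 0 < b * P x + Q x}
        = {b : ℝ | 0 < 1 + b} ∩ ⋂ x, {b : ℝ | 0 < b * P x + Q x} := by
      ext b; simp [Set.mem_iInter]
    rw [this]
    exact (isOpen_lt continuous_const (by continuity)).inter
      (isOpen_iInter_of_finite fun x => isOpen_lt continuous_const (by continuity))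
  have hmem : a ∈ {b : ℝ | 0 < 1 + b ∧ ∀ x, 0 < b * P x + Q x} := by
    refine ⟨by linarith, fun x => ?_⟩
    have := mul_nonneg ha (hsP x).le
    linarith [hsQ x]
  have heq : GJS P Q =ᶠ[nhds a] Gfun P Q := by
    filter_upwards [hopen.mem_nhds hmem] with b hb
    exact GJS_eq_Gfun P Q hsP hsQ hb.1 hb.2
  have hd := hasDerivAt_Gfun P Q (hmem.1.ne') (fun x => (hmem.2 x).ne')
  rw [derivVal_eq P Q hP hQ hsP hsQ hmem.1 hmem.2] at hd
  exact HasDerivAt.congr_of_eventuallyEq hd heq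

noncomputable def hFun (P Q : 𝒳 → ℝ) (a : ℝ) : ℝ :=
  ∑ x, P x * (Real.log (P x) - Real.log (a * P x + Q x) + Real.log (1 + a))

lemma KL_mix_eq_hFun (hsP : FullSupport P) {a : ℝ} (h1 : (0:ℝ) < 1 + a)
    (h2 : ∀ x, 0 < a * P x + Q x) : KL P (mix P Q a) = hFun P Q a := by
  have hmpos : ∀ x, 0 < mix P Q a x := fun x => div_pos (h2 x) h1
  rw [KL_eq_sum P hsP (mix P Q a) hmpos]
  unfold hFun mix
  refine Finset.sum_congr rfl fun x _ => ?_
  rw [Real.log_div (h2 x).ne' h1.ne']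
  ring

lemma continuousAt_KLmix (hsP : FullSupport P) (hsQ : FullSupport Q) :
    ContinuousAt (fun a => KL P (mix P Q a)) 0 := by
  have hopen : IsOpen {b : ℝ | 0 < 1 + b ∧ ∀ x, 0 < b * P x + Q x} := by
    have : {b : ℝ | 0 < 1 + b ∧ ∀ x, 0 < b * P x + Q x}
        = {b : ℝ | 0 < 1 + b} ∩ ⋂ x, {b : ℝ | 0 < b * P x + Q x} := by
      ext b; simp [Set.mem_iInter]
    rw [this]
    exact (isOpen_lt continuous_const (by continuity)).inter
      (isOpen_iInter_of_finite fun x => isOpen_lt continuous_const (by continuity))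
  have hmem : (0:ℝ) ∈ {b : ℝ | 0 < 1 + b ∧ ∀ x, 0 < b * P x + Q x} :=
    ⟨by norm_num, fun x => by simpa using hsQ x⟩
  have heq : (fun a => KL P (mix P Q a)) =ᶠ[nhds (0:ℝ)] hFun P Q := by
    filter_upwards [hopen.mem_nhds hmem] with b hb
    exact KL_mix_eq_hFun P Q hsP hb.1 hb.2
  have hc : ContinuousAt (hFun P Q) 0 := by
    have hterm : ∀ x : 𝒳, ContinuousAt
        (fun a : ℝ => P x * (Real.log (P x) - Real.log (a * P x + Q x) + Real.log (1 + a))) 0 := by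
      intro x
      have l1 : ContinuousAt (fun a : ℝ => Real.log (a * P x + Q x)) 0 := by
        have hg : ContinuousAt (fun a : ℝ => a * P x + Q x) 0 := by fun_prop
        have hne : ((0:ℝ) * P x + Q x) ≠ 0 := by simpa using (hsQ x).ne'
        exact ContinuousAt.log hg hne
      have l2 : ContinuousAt (fun a : ℝ => Real.log (1 + a)) 0 := by
        have hg : ContinuousAt (fun a : ℝ => 1 + a) 0 := by fun_prop
        have hne : ((1:ℝ) + 0) ≠ 0 := by norm_num
        exact ContinuousAt.log hg hne
      exact continuousAt_const.mul ((continuousAt_const.sub l1).add l2)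
    unfold hFun
    exact tendsto_finset_sum _ fun x _ => hterm x
  exact hc.congr heq.symm

lemma GJS_zero (hsQ : FullSupport Q) : GJS P Q 0 = 0 := by
  have hm : mix P Q 0 = Q := by
    funext x; unfold mix; simp
  have hKQ : KL Q Q = 0 := by
    unfold KL
    exact Finset.sum_eq_zero fun x _ => by rw [div_self (hsQ x).ne', Real.log_one, mul_zero]
  unfold GJS
  rw [hm, hKQ]
  ring

lemma GJS_le_bound (hP : IsPMF P) (hQ : IsPMF Q) (hsP : FullSupport P) (hsQ : FullSupport Q)
    {a : ℝ} (ha : 0 < a) : GJS P Q a ≤ 1 + Real.log (1 + a) := by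
  have h1 : (0:ℝ) < 1 + a := by linarith
  have hu : ∀ x, 0 < a * P x + Q x := by
    intro x
    have := mul_pos ha (hsP x)
    linarith [hsQ x]
  have hmpos : ∀ x, 0 < mix P Q a x := mix_pos_s15 P Q hsP hsQ ha.le
  have hKP : KL P (mix P Q a) ≤ Real.log ((1 + a) / a) := by
    unfold KL
    calc ∑ x, P x * Real.log (P x / mix P Q a x)
        ≤ ∑ x, P x * Real.log ((1 + a) / a) := by
          refine Finset.sum_le_sum fun x _ => ?_
          refine mul_le_mul_of_nonneg_left ?_ (hsP x).le
          apply Real.log_le_log (div_pos (hsP x) (hmpos x))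
          have hrw : P x / mix P Q a x = P x * (1 + a) / (a * P x + Q x) := by
            unfold mix
            rw [div_div_eq_mul_div]
          rw [hrw, div_le_div_iff₀ (hu x) ha]
          nlinarith [hsQ x, hsP x]
      _ = Real.log ((1 + a) / a) := by rw [← Finset.sum_mul, hP.2, one_mul]
  have hKQ : KL Q (mix P Q a) ≤ Real.log (1 + a) := by
    unfold KL
    calc ∑ x, Q x * Real.log (Q x / mix P Q a x)
        ≤ ∑ x, Q x * Real.log (1 + a) := by
          refine Finset.sum_le_sum fun x _ => ?_
          refine mul_le_mul_of_nonneg_left ?_ (hsQ x).le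
          apply Real.log_le_log (div_pos (hsQ x) (hmpos x))
          have hrw : Q x / mix P Q a x = Q x * (1 + a) / (a * P x + Q x) := by
            unfold mix
            rw [div_div_eq_mul_div]
          rw [hrw, div_le_iff₀ (hu x)]
          nlinarith [hsQ x, hsP x, mul_pos ha (hsP x)]
      _ = Real.log (1 + a) := by rw [← Finset.sum_mul, hQ.2, one_mul]
  have haKP : a * KL P (mix P Q a) ≤ 1 := by
    have h2 : Real.log ((1 + a) / a) ≤ (1 + a) / a - 1 :=
      Real.log_le_sub_one_of_pos (div_pos h1 ha)
    have h3 : (1 + a) / a - 1 = 1 / a := by field_simp; ring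
    have h4 : a * KL P (mix P Q a) ≤ a * (1 / a) := by
      apply mul_le_mul_of_nonneg_left _ ha.le
      rw [← h3]
      exact le_trans hKP h2
    rwa [mul_one_div, div_self ha.ne'] at h4
  unfold GJS
  linarith

end Aux

theorem gjs_fixed_point_iff_and_unique
    (P Q : 𝒳 → ℝ) (hP : IsPMF P) (hQ : IsPMF Q)
    (hsP : FullSupport P) (hsQ : FullSupport Q)
    (lam : ℝ) (hlam : 0 < lam) :
    ((∃ α : ℝ, 0 < α ∧ GJS P Q α = lam * α) ↔ lam < KL P Q) ∧
    (∀ α α' : ℝ, 0 < α → 0 < α' →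
      GJS P Q α = lam * α → GJS P Q α' = lam * α' → α = α') := by

  classical
  set f : ℝ → ℝ := fun b => GJS P Q b - lam * b with hf_def
  have hf0 : f 0 = 0 := by
    simp [hf_def, GJS_zero P Q hsQ]
  have hderiv : ∀ b : ℝ, 0 ≤ b → HasDerivAt f (KL P (mix P Q b) - lam) b := by
    intro b hb
    have h2 : HasDerivAt (fun b : ℝ => lam * b) lam b := by
      simpa using (hasDerivAt_id b).const_mul lam
    exact (hasDerivAt_GJS P Q hP hQ hsP hsQ hb).sub h2
  have hcont : ∀ {u v : ℝ}, 0 ≤ u → ContinuousOn f (Set.Icc u v) := by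
    intro u v hu b hb
    exact ((hderiv b (le_trans hu hb.1)).continuousAt).continuousWithinAt
  have hmix0 : mix P Q 0 = Q := by
    funext x; unfold mix; simp
  -- case P = Q : no positive solutions
  have hPQcase : P = Q → ∀ α : ℝ, 0 < α → GJS P Q α ≠ lam * α := by
    intro hpq α hα
    subst hpq
    have h1 : (0:ℝ) < 1 + α := by linarith
    have hm : mix P P α = P := by
      funext x; unfold mix; field_simp; ring
    have hKP : KL P P = 0 := by
      unfold KL
      exact Finset.sum_eq_zero fun x _ => by rw [div_self (hsP x).ne', Real.log_one, mul_zero]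
    have hG : GJS P P α = 0 := by
      unfold GJS
      rw [hm, hKP]; ring
    rw [hG]
    intro h
    nlinarith
  -- no solutions when lam ≥ KL P Q
  have hnosol : KL P Q ≤ lam → ∀ α : ℝ, 0 < α → f α < 0 := by
    intro hge α hα
    by_cases hpq : P = Q
    · have h1 : (0:ℝ) < 1 + α := by linarith
      have hm : mix P Q α = P := by
        subst hpq; funext x; unfold mix; field_simp; ring
      have hKP : KL P P = 0 := by
        unfold KL
        exact Finset.sum_eq_zero fun x _ => by rw [div_self (hsP x).ne', Real.log_one, mul_zero]
      have hG : GJS P Q α = 0 := by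
        unfold GJS
        rw [hm]
        rw [hpq] at hKP ⊢
        rw [hKP]
        ring
      simp only [hf_def]
      rw [hG]
      nlinarith
    · have hanti : StrictAntiOn f (Set.Icc 0 α) := by
        apply strictAntiOn_of_deriv_neg (convex_Icc 0 α) (hcont le_rfl)
        intro b hb
        rw [interior_Icc] at hb
        rw [(hderiv b hb.1.le).deriv]
        have hlt : KL P (mix P Q b) < KL P (mix P Q 0) :=
          kl_mix_strict_anti P Q hP hQ hsP hsQ hpq le_rfl hb.1
        rw [hmix0] at hlt
        linarith
      have := hanti (Set.left_mem_Icc.mpr hα.le) (Set.right_mem_Icc.mpr hα.le) hα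
      rw [hf0] at this
      exact this
  -- existence when lam < KL P Q
  have hexist : lam < KL P Q → ∃ α : ℝ, 0 < α ∧ GJS P Q α = lam * α := by
    intro hlt
    have hcKL : ContinuousAt (fun b => KL P (mix P Q b)) 0 := continuousAt_KLmix P Q hsP hsQ
    have hnh : {b : ℝ | lam < KL P (mix P Q b)} ∈ nhds (0:ℝ) := by
      have : Set.Ioi lam ∈ nhds (KL P (mix P Q 0)) := by
        apply Ioi_mem_nhds
        rw [hmix0]; exact hlt
      exact hcKL.preimage_mem_nhds this
    obtain ⟨ε, hε, hball⟩ := Metric.mem_nhds_iff.mp hnh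
    set e := ε / 2 with he_def
    have he : 0 < e := by positivity
    have hmono : StrictMonoOn f (Set.Icc 0 e) := by
      apply strictMonoOn_of_deriv_pos (convex_Icc 0 e) (hcont le_rfl)
      intro b hb
      rw [interior_Icc] at hb
      rw [(hderiv b hb.1.le).deriv]
      have hbmem : b ∈ Metric.ball (0:ℝ) ε := by
        rw [Metric.mem_ball, Real.dist_eq, sub_zero, abs_of_pos hb.1]
        have : b < e := hb.2
        rw [he_def] at this
        linarith
      have := hball hbmem
      have h2 : lam < KL P (mix P Q b) := this
      linarith
    have hfe : 0 < f e := by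
      have := hmono (Set.left_mem_Icc.mpr he.le) (Set.right_mem_Icc.mpr he.le) he
      rw [hf0] at this
      exact this
    -- choose large A with f A < 0
    set t : ℝ := max (max 2 (6 / lam)) (Real.sqrt (e + 2)) with ht_def
    have ht2 : (2:ℝ) ≤ t := le_trans (le_max_left 2 (6 / lam)) (le_max_left _ _)
    have ht0 : (0:ℝ) < t := by linarith
    have ht6 : 6 ≤ lam * t := by
      have : 6 / lam ≤ t := le_trans (le_max_right 2 (6 / lam)) (le_max_left _ _)
      rw [div_le_iff₀ hlam] at this
      linarith [this]
    have htsq : e + 2 ≤ t ^ 2 := by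
      have h1 : Real.sqrt (e + 2) ≤ t := le_max_right _ _
      have h2 : Real.sqrt (e + 2) ^ 2 = e + 2 := Real.sq_sqrt (by linarith)
      calc e + 2 = Real.sqrt (e + 2) ^ 2 := h2.symm
        _ ≤ t ^ 2 := by nlinarith [Real.sqrt_nonneg (e + 2)]
    set A : ℝ := t ^ 2 - 1 with hA_def
    have hAe : e < A := by nlinarith
    have hA0 : 0 < A := by nlinarith
    have hfA : f A < 0 := by
      have hb := GJS_le_bound P Q hP hQ hsP hsQ hA0
      have h1A : (1:ℝ) + A = t ^ 2 := by rw [hA_def]; ring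
      have hlog : Real.log (1 + A) = 2 * Real.log t := by
        rw [h1A, Real.log_pow]
        norm_num
      have hlogt : Real.log t ≤ t - 1 := Real.log_le_sub_one_of_pos ht0
      have hkey1 : 6 * t ≤ lam * t ^ 2 := by nlinarith
      have hkey2 : 4 * lam ≤ lam * t ^ 2 := by nlinarith
      have : f A ≤ 1 + Real.log (1 + A) - lam * A := by
        simp only [hf_def]
        linarith [hb]
      rw [hlog] at this
      have hfinal : 1 + 2 * Real.log t - lam * A < 0 := by
        have : 1 + 2 * Real.log t - lam * A ≤ 1 + 2 * (t - 1) - lam * (t ^ 2 - 1) := by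
          rw [hA_def]; linarith
        nlinarith
      linarith
    obtain ⟨c, hcmem, hcval⟩ : ∃ c ∈ Set.Icc e A, f c = 0 := by
      have hsub := intermediate_value_Icc' hAe.le (hcont he.le)
      have h0mem : (0:ℝ) ∈ Set.Icc (f A) (f e) := ⟨hfA.le, hfe.le⟩
      obtain ⟨c, hc1, hc2⟩ := hsub h0mem
      exact ⟨c, hc1, hc2⟩
    refine ⟨c, lt_of_lt_of_le he hcmem.1, ?_⟩
    have : GJS P Q c - lam * c = 0 := hcval
    linarith
  constructor
  · constructor
    · rintro ⟨α, hα, hαeq⟩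
      by_contra hge
      push_neg at hge
      have := hnosol hge α hα
      simp only [hf_def] at this
      rw [hαeq] at this
      linarith
    · exact hexist
  · intro α α' hα hα' h h'
    by_cases hpq : P = Q
    · exact absurd h (hPQcase hpq α hα)
    have key : ∀ β β' : ℝ, 0 < β → β < β' → f β = 0 → f β' = 0 → False := by
      intro β β' hβ hββ' hfβ hfβ'
      obtain ⟨c₁, hc₁, hc₁'⟩ := exists_hasDerivAt_eq_zero hβ (hcont le_rfl)
        (by rw [hf0, hfβ]) (fun b hb => hderiv b hb.1.le)
      obtain ⟨c₂, hc₂, hc₂'⟩ := exists_hasDerivAt_eq_zero hββ' (hcont hβ.le)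
        (by rw [hfβ, hfβ']) (fun b hb => hderiv b (le_trans hβ.le hb.1.le))
      have hltc : KL P (mix P Q c₂) < KL P (mix P Q c₁) :=
        kl_mix_strict_anti P Q hP hQ hsP hsQ hpq hc₁.1.le (lt_trans hc₁.2 hc₂.1)
      linarith
    have hfα : f α = 0 := by simp only [hf_def]; rw [h]; ring
    have hfα' : f α' = 0 := by simp only [hf_def]; rw [h']; ring
    rcases lt_trichotomy α α' with hlt | heq | hgt
    · exact absurd (key α α' hα hlt hfα hfα') not_false
    · exact heq
    · exact absurd (key α' α hα' hgt hfα' hfα) not_false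

end SeqClass
end
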